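/- arXiv:1904.05227 — 9 statements merged into one kernel-verified Lean document; each statement's English description precedes it below -/
import Mathlib

section
/- Let q be a prime power and let n ≤ m be positive integers. If C ⊆ 𝔽_q^{n×m} is a non-zero 𝔽_q-linear rank-metric code with minimum distance d(C), then dim_{𝔽_q}(C) ≤ m(n − d(C) + 1). -/
open Matrix

/-- The minimum (rank) distance of a rank-metric code: the minimum rank of a
non-zero codeword. -/
noncomputable def minRankDist {F : Type*} [Field F] {n m : ℕ}
    (C : Submodule F (Matrix (Fin n) (Fin m) F)) : ℕ :=
  sInf {r : ℕ | ∃ M ∈ C, M ≠ 0 ∧ M.rank = r}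

/-- Singleton-like bound for rank-metric codes (Delsarte): if `C ⊆ 𝔽_q^{n×m}` is a
non-zero rank-metric code with `n ≤ m`, then `dim C ≤ m (n - d(C) + 1)`. -/
theorem singleton_bound_rank_metric {F : Type*} [Field F] [Fintype F] {n m : ℕ}
    (hn : 0 < n) (hnm : n ≤ m) (C : Submodule F (Matrix (Fin n) (Fin m) F))
    (hC : C ≠ ⊥) :
    Module.finrank F C ≤ m * (n - minRankDist C + 1) := by
  classical
  set d := minRankDist C with hdd
  -- the defining set is nonempty, so the infimum is attained
  obtain ⟨M₀, hM₀C, hM₀ne, hM₀rank⟩ : ∃ M ∈ C, M ≠ 0 ∧ M.rank = d := by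
    obtain ⟨M, hM, hMne⟩ := (Submodule.ne_bot_iff C).mp hC
    have hne : {r : ℕ | ∃ M ∈ C, M ≠ 0 ∧ M.rank = r}.Nonempty :=
      ⟨M.rank, M, hM, hMne, rfl⟩
    exact Nat.sInf_mem hne
  have hd1 : 1 ≤ d := by
    rcases Nat.eq_zero_or_pos d with h0 | h
    · exfalso
      apply hM₀ne
      have hr : M₀.rank = 0 := by omega
      rw [Matrix.rank] at hr
      have hbot : LinearMap.range M₀.mulVecLin = ⊥ := Submodule.finrank_eq_zero.mp hr
      have hz : M₀.mulVecLin = 0 := LinearMap.range_eq_bot.mp hbot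
      ext i j
      have := congrFun (LinearMap.congr_fun hz (Pi.single j 1)) i
      simpa [Matrix.mulVecLin_apply, Matrix.mulVec_single_one] using this
    · exact h
  have hdn : d ≤ n := hM₀rank ▸ Matrix.rank_le_height M₀
  have hlow : ∀ M ∈ C, M ≠ 0 → d ≤ M.rank := fun M hM hne =>
    Nat.sInf_le ⟨M, hM, hne, rfl⟩
  have hk : n - d + 1 ≤ n := by omega
  -- projection onto the first n - d + 1 rows
  let f : Matrix (Fin n) (Fin m) F →ₗ[F] Matrix (Fin (n - d + 1)) (Fin m) F :=
    { toFun := fun M => M.submatrix (Fin.castLE hk) id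
      map_add' := fun _ _ => rfl
      map_smul' := fun _ _ => rfl }
  have hinj : Function.Injective (f.comp C.subtype) := by
    rw [← LinearMap.ker_eq_bot, LinearMap.ker_eq_bot']
    intro x hx
    have hx' : ∀ i j, (x : Matrix (Fin n) (Fin m) F) (Fin.castLE hk i) j = 0 := by
      intro i j
      have := congrFun (congrFun hx i) j
      exact this
    by_contra hxne
    have hxne' : (x : Matrix (Fin n) (Fin m) F) ≠ 0 := by
      simpa [Submodule.coe_eq_zero] using hxne
    have hdle : d ≤ ((x : Matrix (Fin n) (Fin m) F)).rank := hlow _ x.2 hxne'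
    -- rank bound: the column space lies in the kernel of restriction to first rows
    set L : (Fin n → F) →ₗ[F] (Fin (n - d + 1) → F) :=
      LinearMap.funLeft F F (Fin.castLE hk)
    have hrange : LinearMap.range ((x : Matrix (Fin n) (Fin m) F)).mulVecLin ≤
        LinearMap.ker L := by
      rintro w ⟨v, rfl⟩
      ext i
      simp only [L, LinearMap.funLeft_apply, Matrix.mulVecLin_apply, Matrix.mulVec,
        dotProduct]
      simp [hx' i]
    have hLsurj : Function.Surjective L :=
      LinearMap.funLeft_surjective_of_injective F F _ (Fin.castLE_injective hk)
    have hkerL : Module.finrank F (LinearMap.ker L) = d - 1 := by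
      have h1 := LinearMap.finrank_range_add_finrank_ker L
      have h2 : LinearMap.range L = ⊤ := LinearMap.range_eq_top.mpr hLsurj
      rw [h2] at h1
      simp only [finrank_top, Module.finrank_pi, Fintype.card_fin] at h1
      omega
    have hrank_le : ((x : Matrix (Fin n) (Fin m) F)).rank ≤ d - 1 := by
      rw [Matrix.rank, ← hkerL]
      exact Submodule.finrank_mono hrange
    omega
  have hfin : Module.finrank F C ≤
      Module.finrank F (Matrix (Fin (n - d + 1)) (Fin m) F) :=
    LinearMap.finrank_le_finrank_of_injective hinj
  have hmat : Module.finrank F (Matrix (Fin (n - d + 1)) (Fin m) F) =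
      (n - d + 1) * m := by
    simp [Module.finrank_matrix]
  rw [hmat] at hfin
  rw [mul_comm]
  exact hfin
end

section
/- Let q be a prime power and let X_1, X_2 ∈ 𝔽_q^{k×n×m} be two generator tensors of the same rank-metric code C ⊆ 𝔽_q^{n×m} of dimension k (that is, ss_1(X_1) = ss_1(X_2) = C). Then trk(X_1) = trk(X_2). Moreover, if C ≠ {0}, this common value equals the minimum integer R > 0 such that C is contained in the 𝔽_q-span of R matrices of rank one. -/
open Matrix

/-- The tensor rank of a 3-tensor `X ∈ F^{k×n×m}`. -/
noncomputable def tensorRank {F : Type*} [Field F] {k n m : ℕ}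
    (X : Fin k → Fin n → Fin m → F) : ℕ :=
  sInf {R : ℕ | ∃ (u : Fin R → Fin k → F) (v : Fin R → Fin n → F) (w : Fin R → Fin m → F),
    ∀ i j l, X i j l = ∑ r, u r i * v r j * w r l}

/-- The first slice space of a 3-tensor `X ∈ F^{k×n×m}`. -/
def sliceSpace1 {F : Type*} [Field F] {k n m : ℕ} (X : Fin k → Fin n → Fin m → F) :
    Submodule F (Matrix (Fin n) (Fin m) F) :=
  Submodule.span F (Set.range fun i => Matrix.of (X i))


lemma trkSet_nonempty {F : Type*} [Field F] {k n m : ℕ} (X : Fin k → Fin n → Fin m → F) :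
    {R : ℕ | ∃ (u : Fin R → Fin k → F) (v : Fin R → Fin n → F) (w : Fin R → Fin m → F),
      ∀ i j l, X i j l = ∑ r, u r i * v r j * w r l}.Nonempty := by
  classical
  refine ⟨n * m, fun r i => X i (finProdFinEquiv.symm r).1 (finProdFinEquiv.symm r).2,
    fun r j => if (finProdFinEquiv.symm r).1 = j then 1 else 0,
    fun r l => if (finProdFinEquiv.symm r).2 = l then 1 else 0, fun i j l => ?_⟩
  rw [show (∑ r : Fin (n * m),
      X i (finProdFinEquiv.symm r).1 (finProdFinEquiv.symm r).2 *
      (if (finProdFinEquiv.symm r).1 = j then (1:F) else 0) *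
      (if (finProdFinEquiv.symm r).2 = l then (1:F) else 0)) =
      ∑ p : Fin n × Fin m, X i p.1 p.2 * (if p.1 = j then (1:F) else 0) *
      (if p.2 = l then (1:F) else 0) from
    Equiv.sum_comp finProdFinEquiv.symm
      (fun p : Fin n × Fin m => X i p.1 p.2 * (if p.1 = j then (1:F) else 0)
        * (if p.2 = l then (1:F) else 0))]
  rw [Fintype.sum_prod_type]
  simp [Finset.sum_ite_eq, mul_ite]

lemma rank_vecMulVec_eq_one {F : Type*} [Field F] {n m : ℕ} {v : Fin n → F} {w : Fin m → F}
    (hv : v ≠ 0) (hw : w ≠ 0) : (vecMulVec v w).rank = 1 := by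
  classical
  obtain ⟨l0, hl0⟩ := Function.ne_iff.mp hw
  have hl0' : w l0 ≠ 0 := by simpa using hl0
  have h1 : 1 ≤ (vecMulVec v w).rank := by
    have hx : (vecMulVec v w) *ᵥ (Pi.single l0 1) = w l0 • v := by
      ext j
      simp [mulVec, dotProduct, vecMulVec, Pi.single_apply, mul_comm]
    have hmem : w l0 • v ∈ LinearMap.range (vecMulVec v w).mulVecLin :=
      ⟨Pi.single l0 1, hx⟩
    have hle : (Submodule.span F {w l0 • v}) ≤ LinearMap.range (vecMulVec v w).mulVecLin :=
      Submodule.span_le.mpr (Set.singleton_subset_iff.mpr hmem)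
    calc 1 = Module.finrank F ↥(Submodule.span F {w l0 • v}) :=
          (finrank_span_singleton (smul_ne_zero hl0' hv)).symm
      _ ≤ (vecMulVec v w).rank := Submodule.finrank_mono hle
  have h2 : (vecMulVec v w).rank ≤ 1 := by
    rw [Matrix.rank, Matrix.range_mulVecLin]
    have hsub : Set.range (vecMulVec v w)ᵀ ⊆ (Submodule.span F {v} : Set (Fin n → F)) := by
      rintro _ ⟨l, rfl⟩
      have : (vecMulVec v w)ᵀ l = w l • v := by
        ext j; simp [vecMulVec, transpose, mul_comm]
      rw [this]
      exact Submodule.smul_mem _ _ (Submodule.mem_span_singleton_self v)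
    have hle : Submodule.span F (Set.range (vecMulVec v w)ᵀ) ≤ Submodule.span F {v} :=
      Submodule.span_le.mpr hsub
    calc Module.finrank F ↥(Submodule.span F (Set.range (vecMulVec v w)ᵀ))
        ≤ Module.finrank F ↥(Submodule.span F {v}) := Submodule.finrank_mono hle
      _ = 1 := finrank_span_singleton hv
  omega

lemma exists_outer_of_rank_one {F : Type*} [Field F] {n m : ℕ}
    {A : Matrix (Fin n) (Fin m) F} (h : A.rank = 1) :
    ∃ (v : Fin n → F) (w : Fin m → F), ∀ j l, A j l = v j * w l := by
  classical
  rw [Matrix.rank, Matrix.range_mulVecLin] at h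
  obtain ⟨v₀, -, hmul⟩ := finrank_eq_one_iff'.mp h
  have hcol : ∀ l, Aᵀ l ∈ Submodule.span F (Set.range Aᵀ) :=
    fun l => Submodule.subset_span (Set.mem_range_self l)
  choose c hc using fun l => hmul ⟨Aᵀ l, hcol l⟩
  refine ⟨v₀.1, c, fun j l => ?_⟩
  have h2 := congrFun (congrArg Subtype.val (hc l))  j
  simp only [Submodule.coe_smul, Pi.smul_apply, smul_eq_mul] at h2
  have h3 : A j l = Aᵀ l j := rfl
  rw [h3, ← h2, mul_comm]


-- if R in S then tensorRank X ≤ R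
lemma trk_le_of_mem {F : Type*} [Field F] {k n m : ℕ}
    {C : Submodule F (Matrix (Fin n) (Fin m) F)} {X : Fin k → Fin n → Fin m → F}
    (h : sliceSpace1 X = C) {R : ℕ}
    (A : Fin R → Matrix (Fin n) (Fin m) F) (hA1 : ∀ r, (A r).rank = 1)
    (hle : C ≤ Submodule.span F (Set.range A)) :
    tensorRank X ≤ R := by
  classical
  choose v w hvw using fun r => exists_outer_of_rank_one (hA1 r)
  have hslice : ∀ i, Matrix.of (X i) ∈ Submodule.span F (Set.range A) := by
    intro i
    apply hle
    rw [← h]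
    exact Submodule.subset_span (Set.mem_range_self i)
  have hfun : ∀ i, ∃ c : Fin R → F, ∑ r, c r • A r = Matrix.of (X i) := by
    intro i
    exact (Submodule.mem_span_range_iff_exists_fun F).mp (hslice i)
  choose c hc using hfun
  apply Nat.sInf_le
  refine ⟨fun r i => c i r, v, w, fun i j l => ?_⟩
  have h2 : X i j l = (∑ r, c i r • A r) j l := by rw [hc i]; rfl
  rw [h2, Matrix.sum_apply]
  apply Finset.sum_congr rfl
  intro r _
  rw [Matrix.smul_apply, hvw r j l, smul_eq_mul]
  ring

lemma trk_eq_sInf {F : Type*} [Field F] {k n m : ℕ}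
    (C : Submodule F (Matrix (Fin n) (Fin m) F)) (hC : C ≠ ⊥)
    (X : Fin k → Fin n → Fin m → F) (h : sliceSpace1 X = C) :
    tensorRank X = sInf {R : ℕ | 0 < R ∧
      ∃ A : Fin R → Matrix (Fin n) (Fin m) F, (∀ r, (A r).rank = 1) ∧
        C ≤ Submodule.span F (Set.range A)} := by
  classical
  set S := {R : ℕ | 0 < R ∧
      ∃ A : Fin R → Matrix (Fin n) (Fin m) F, (∀ r, (A r).rank = 1) ∧
        C ≤ Submodule.span F (Set.range A)} with hS
  -- get a nonzero matrix in C to build a rank-one matrix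
  obtain ⟨M, hMC, hMne⟩ := Submodule.exists_mem_ne_zero_of_ne_bot hC
  obtain ⟨j0, hj0⟩ : ∃ j0, M j0 ≠ 0 := by
    by_contra hcon
    push_neg at hcon
    exact hMne (by ext j l; simp [hcon j])
  obtain ⟨l0, hl0⟩ := Function.ne_iff.mp hj0
  -- the tensor rank's decomposition
  have hT : ∃ (u : Fin (tensorRank X) → Fin k → F) (v : Fin (tensorRank X) → Fin n → F)
      (w : Fin (tensorRank X) → Fin m → F),
      ∀ i j l, X i j l = ∑ r, u r i * v r j * w r l :=
    Nat.sInf_mem (trkSet_nonempty X)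
  obtain ⟨u, v, w, hd⟩ := hT
  have hmem : tensorRank X ∈ S := by
    constructor
    · -- positivity
      rcases Nat.eq_zero_or_pos (tensorRank X) with h0 | h0
      · exfalso
        apply hC
        rw [← h]
        have hz : ∀ i, Matrix.of (X i) = 0 := by
          intro i
          ext j l
          rw [Matrix.of_apply, hd i j l]
          haveI : IsEmpty (Fin (tensorRank X)) := by rw [h0]; infer_instance
          rw [Finset.univ_eq_empty, Finset.sum_empty]
          simp
        rw [sliceSpace1]
        apply le_bot_iff.mp
        rw [Submodule.span_le]
        rintro _ ⟨i, rfl⟩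
        simp [hz i]
      · exact h0
    · -- the family of rank-one matrices
      set B : Matrix (Fin n) (Fin m) F :=
        vecMulVec (Pi.single j0 1) (Pi.single l0 1) with hB
      have hBrank : B.rank = 1 := by
        apply rank_vecMulVec_eq_one
        · intro hcon
          have := congrFun hcon j0
          simp at this
        · intro hcon
          have := congrFun hcon l0
          simp at this
      set A : Fin (tensorRank X) → Matrix (Fin n) (Fin m) F :=
        fun r => if v r = 0 ∨ w r = 0 then B else vecMulVec (v r) (w r) with hA
      have hAdef : ∀ r, A r = if v r = 0 ∨ w r = 0 then B else vecMulVec (v r) (w r) :=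
        fun _ => rfl
      refine ⟨A, fun r => ?_, ?_⟩
      · rw [hAdef r]
        by_cases hr : v r = 0 ∨ w r = 0
        · rw [if_pos hr]; exact hBrank
        · rw [if_neg hr]
          push_neg at hr
          exact rank_vecMulVec_eq_one hr.1 hr.2
      · rw [← h, sliceSpace1, Submodule.span_le]
        rintro _ ⟨i, rfl⟩
        apply (Submodule.mem_span_range_iff_exists_fun F).mpr
        refine ⟨fun r => if v r = 0 ∨ w r = 0 then 0 else u r i, ?_⟩
        ext j l
        have hx : Matrix.of (X i) j l = ∑ r : Fin (tensorRank X), u r i * v r j * w r l :=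
          hd i j l
        show (∑ r : Fin (tensorRank X),
          (if v r = 0 ∨ w r = 0 then 0 else u r i) • A r) j l = Matrix.of (X i) j l
        rw [hx, Matrix.sum_apply]
        apply Finset.sum_congr rfl
        intro r _
        rw [Matrix.smul_apply, smul_eq_mul, hAdef r]
        by_cases hr : v r = 0 ∨ w r = 0
        · rw [if_pos hr, if_pos hr, zero_mul]
          rcases hr with hr | hr
          · rw [show v r j = 0 from congrFun hr j]; ring
          · rw [show w r l = 0 from congrFun hr l]; ring
        · rw [if_neg hr, if_neg hr, vecMulVec_apply]
          ring
  have hSne : S.Nonempty := ⟨_, hmem⟩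
  obtain ⟨hpos, A, hA1, hAle⟩ := Nat.sInf_mem hSne
  exact le_antisymm (trk_le_of_mem h A hA1 hAle) (Nat.sInf_le hmem)


lemma trk_zero_of_bot {F : Type*} [Field F] {k n m : ℕ} (X : Fin k → Fin n → Fin m → F)
    (h : sliceSpace1 X = ⊥) : tensorRank X = 0 := by
  have hX : ∀ i j l, X i j l = 0 := by
    intro i j l
    have hm : Matrix.of (X i) ∈ sliceSpace1 X :=
      Submodule.subset_span (Set.mem_range_self i)
    rw [h, Submodule.mem_bot] at hm
    exact congrFun (congrFun hm j) l
  have h0 : (0:ℕ) ∈ {R : ℕ | ∃ (u : Fin R → Fin k → F) (v : Fin R → Fin n → F)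
      (w : Fin R → Fin m → F), ∀ i j l, X i j l = ∑ r, u r i * v r j * w r l} :=
    ⟨fun r => r.elim0, fun r => r.elim0, fun r => r.elim0, by
      intro i j l; simp [hX i j l]⟩
  exact Nat.eq_zero_of_le_zero (Nat.sInf_le h0)

/-- Any two generator tensors of a rank-metric code `C` have the same tensor rank;
if `C ≠ 0`, this common value is the least `R > 0` such that `C` is contained in the
span of `R` rank-one matrices. -/
theorem tensorRank_generator_tensors {F : Type*} [Field F] [Fintype F] {k n m : ℕ}
    (C : Submodule F (Matrix (Fin n) (Fin m) F))
    (hk : Module.finrank F C = k)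
    (X₁ X₂ : Fin k → Fin n → Fin m → F)
    (h₁ : sliceSpace1 X₁ = C) (h₂ : sliceSpace1 X₂ = C) :
    tensorRank X₁ = tensorRank X₂ ∧
    (C ≠ ⊥ → tensorRank X₁ = sInf {R : ℕ | 0 < R ∧
      ∃ A : Fin R → Matrix (Fin n) (Fin m) F, (∀ r, (A r).rank = 1) ∧
        C ≤ Submodule.span F (Set.range A)}) := by
  by_cases hbot : C = ⊥
  · subst hbot
    exact ⟨by rw [trk_zero_of_bot X₁ h₁, trk_zero_of_bot X₂ h₂],
      fun hC => absurd rfl hC⟩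
  · have e1 := trk_eq_sInf C hbot X₁ h₁
    have e2 := trk_eq_sInf C hbot X₂ h₂
    exact ⟨e1.trans e2.symm, fun _ => e1⟩
end

section
/- Let q be a prime power, let C ⊆ 𝔽_q^{n×m} be a rank-metric code of dimension k ≥ 1 and minimum distance d, and let A_1, …, A_R ∈ 𝔽_q^{n×m} be linearly independent matrices of rank one such that C ⊆ span_{𝔽_q}{A_1, …, A_R}. Let D = {λ ∈ 𝔽_q^R : Σ_{r=1}^R λ_r A_r ∈ C}. Then: (1) for every λ ∈ 𝔽_q^R, rank(Σ_{r=1}^R λ_r A_r) ≤ wt_H(λ); (2) D is an 𝔽_q-linear subspace of 𝔽_q^R with dim(D) = k, and every non-zero λ ∈ D satisfies wt_H(λ) ≥ d. -/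
open Matrix

lemma rank_add_le' {F : Type*} [Field F] {n m : ℕ} (A B : Matrix (Fin n) (Fin m) F) :
    (A + B).rank ≤ A.rank + B.rank := by
  rw [Matrix.rank, Matrix.rank, Matrix.rank, mulVecLin_add]
  have h : LinearMap.range (A.mulVecLin + B.mulVecLin)
      ≤ LinearMap.range A.mulVecLin ⊔ LinearMap.range B.mulVecLin := by
    rintro x ⟨v, rfl⟩
    exact Submodule.add_mem_sup ⟨v, rfl⟩ ⟨v, rfl⟩
  exact le_trans (Submodule.finrank_mono h)
    (Submodule.finrank_add_le_finrank_add_finrank _ _)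

lemma rank_smul_le' {F : Type*} [Field F] {n m : ℕ} (c : F) (A : Matrix (Fin n) (Fin m) F) :
    (c • A).rank ≤ A.rank := by
  apply Submodule.finrank_mono
  rintro x ⟨v, rfl⟩
  exact ⟨c • v, by simp [mulVecLin_apply, Matrix.mulVec_smul, smul_mulVec]⟩

lemma rank_sum_le {F : Type*} [Field F] {n m : ℕ} {ι : Type*} (s : Finset ι)
    (M : ι → Matrix (Fin n) (Fin m) F) :
    (∑ i ∈ s, M i).rank ≤ ∑ i ∈ s, (M i).rank := by
  classical
  induction s using Finset.induction_on with
  | empty => simp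
  | insert _ _ h ih =>
      rw [Finset.sum_insert h, Finset.sum_insert h]
      exact le_trans (rank_add_le' _ _) (Nat.add_le_add_left ih _)

/-- Given a rank-metric code `C ⊆ 𝔽_q^{n×m}` of dimension `k ≥ 1` and minimum distance
`d`, contained in the span of linearly independent rank-one matrices `A_1, …, A_R`:
(1) `rank(Σ λ_r A_r) ≤ wt_H(λ)` for all `λ`; and (2) `D = {λ : Σ λ_r A_r ∈ C}` is a
`k`-dimensional subspace all of whose non-zero vectors have Hamming weight `≥ d`. -/
theorem block_code_from_R_basis {F : Type*} [Field F] [Fintype F] [DecidableEq F]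
    {n m k d R : ℕ} (C : Submodule F (Matrix (Fin n) (Fin m) F))
    (A : Fin R → Matrix (Fin n) (Fin m) F)
    (hA1 : ∀ r, (A r).rank = 1) (hAind : LinearIndependent F A)
    (hCA : C ≤ Submodule.span F (Set.range A))
    (hk : Module.finrank F C = k) (hk1 : 1 ≤ k) (hd : minRankDist C = d) :
    (∀ lam : Fin R → F, (∑ r, lam r • A r).rank ≤ hammingNorm lam) ∧
    Module.finrank F (Submodule.comap (Fintype.linearCombination F A) C) = k ∧
    (∀ lam ∈ Submodule.comap (Fintype.linearCombination F A) C,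
      lam ≠ 0 → d ≤ hammingNorm lam) := by
  classical
  have hrank : ∀ lam : Fin R → F, (∑ r, lam r • A r).rank ≤ hammingNorm lam := by
    intro lam
    have h1 : (∑ r, lam r • A r) = ∑ r ∈ Finset.univ.filter (fun r => lam r ≠ 0),
        lam r • A r := by
      rw [Finset.sum_filter]
      congr 1; ext r
      by_cases h : lam r = 0 <;> simp [h]
    rw [h1]
    calc (∑ r ∈ Finset.univ.filter (fun r => lam r ≠ 0), lam r • A r).rank
        ≤ ∑ r ∈ Finset.univ.filter (fun r => lam r ≠ 0), (lam r • A r).rank :=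
          rank_sum_le _ _
      _ ≤ ∑ r ∈ Finset.univ.filter (fun r => lam r ≠ 0), 1 := by
          apply Finset.sum_le_sum
          intro r hr
          have h2 := rank_smul_le' (lam r) (A r)
          rw [hA1 r] at h2
          exact h2
      _ = hammingNorm lam := by simp [hammingNorm]
  have hinj : Function.Injective (Fintype.linearCombination F A) := by
    rw [← LinearMap.ker_eq_bot]
    rw [Submodule.eq_bot_iff]
    intro g hg
    rw [LinearMap.mem_ker, Fintype.linearCombination_apply] at hg
    exact funext (Fintype.linearIndependent_iff.mp hAind g hg)
  refine ⟨hrank, ?_, ?_⟩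
  · -- dimension
    have hrg : LinearMap.range (Fintype.linearCombination F A)
        = Submodule.span F (Set.range A) := Fintype.range_linearCombination F A
    have hmap : Submodule.map (Fintype.linearCombination F A)
        (Submodule.comap (Fintype.linearCombination F A) C) = C := by
      rw [Submodule.map_comap_eq, hrg, inf_eq_right.mpr hCA]
    have := LinearEquiv.finrank_eq
      (Submodule.equivMapOfInjective (Fintype.linearCombination F A) hinj
        (Submodule.comap (Fintype.linearCombination F A) C))
    rw [this, hmap, hk]
  · intro lam hlam hne
    have hM : (Fintype.linearCombination F A) lam ∈ C := hlam
    have hMne : (Fintype.linearCombination F A) lam ≠ 0 := by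
      intro h
      exact hne (hinj (by simpa using h))
    have : d ≤ ((Fintype.linearCombination F A) lam).rank := by
      rw [← hd]
      exact Nat.sInf_le ⟨_, hM, hMne, rfl⟩
    refine le_trans this ?_
    rw [Fintype.linearCombination_apply]
    exact hrank lam
end

section
/- Let q be a prime power and let C ⊆ 𝔽_q^{n×m} be a non-zero rank-metric code of dimension k and minimum distance d(C). Then trk(C) ≥ k + d(C) − 1. -/
open Matrix

/-- The tensor rank of a rank-metric code `C`: the least `R` such that `C` is
contained in the span of `R` rank-one matrices. -/
noncomputable def trkCode {F : Type*} [Field F] {n m : ℕ}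
    (C : Submodule F (Matrix (Fin n) (Fin m) F)) : ℕ :=
  sInf {R : ℕ | ∃ A : Fin R → Matrix (Fin n) (Fin m) F,
    (∀ r, (A r).rank = 1) ∧ C ≤ Submodule.span F (Set.range A)}

section Helpers
variable {F : Type*} [Field F] {n m : ℕ}


lemma myrank_pos {M : Matrix (Fin n) (Fin m) F} (h : M ≠ 0) : 1 ≤ M.rank := by
  rw [Nat.one_le_iff_ne_zero]
  intro h0
  apply h
  have : LinearMap.range M.mulVecLin = ⊥ := Submodule.finrank_eq_zero.mp h0
  have hz : M.mulVecLin = 0 := LinearMap.range_eq_bot.mp this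
  ext i j
  have := congrFun (congrArg DFunLike.coe hz) (Pi.single j 1)
  have := congrFun this i
  simpa [mulVecLin, mulVec_single] using this

lemma myrank_smul_le (c : F) (M : Matrix (Fin n) (Fin m) F) : (c • M).rank ≤ M.rank := by
  unfold Matrix.rank
  apply Submodule.finrank_mono
  rintro x ⟨y, rfl⟩
  exact ⟨c • y, by simp [mulVecLin, smul_mulVec, mulVec_smul]⟩

lemma myrank_add_le (M N : Matrix (Fin n) (Fin m) F) : (M + N).rank ≤ M.rank + N.rank := by
  unfold Matrix.rank
  rw [mulVecLin_add]
  refine le_trans (Submodule.finrank_mono ?_) (Submodule.finrank_add_le_finrank_add_finrank _ _)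
  rintro x ⟨y, rfl⟩
  exact Submodule.add_mem_sup ⟨y, rfl⟩ ⟨y, rfl⟩

lemma myrank_sum_le {ι : Type*} (s : Finset ι) (f : ι → Matrix (Fin n) (Fin m) F) (g : ι → ℕ)
    (hf : ∀ i ∈ s, (f i).rank ≤ g i) : (∑ i ∈ s, f i).rank ≤ ∑ i ∈ s, g i := by
  classical
  induction s using Finset.induction_on with
  | empty => simp
  | insert a s' hx ih =>
    rw [Finset.sum_insert hx, Finset.sum_insert hx]
    exact le_trans (myrank_add_le _ _)
      (Nat.add_le_add (hf _ (Finset.mem_insert_self _ _))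
        (ih fun i hi => hf i (Finset.mem_insert_of_mem hi)))

lemma myrank_stdBasisMatrix (i : Fin n) (j : Fin m) :
    (single i j (1 : F)).rank = 1 := by
  apply le_antisymm
  · unfold Matrix.rank
    have hle : LinearMap.range (single i j (1 : F)).mulVecLin ≤
        Submodule.span F {Pi.single i (1 : F)} := by
      rintro x ⟨y, rfl⟩
      rw [Submodule.mem_span_singleton]
      refine ⟨y j, ?_⟩
      ext i'
      simp only [mulVecLin_apply, single_mulVec, Function.update, Pi.single_apply]
      split <;> simp_all [mul_comm, eq_comm]
    refine le_trans (Submodule.finrank_mono hle) ?_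
    rw [finrank_span_singleton (by
      intro h
      have := congrFun h i
      simp [Pi.single_eq_same] at this)]
  · exact myrank_pos (by
      intro h
      have := congrFun (congrFun h i) j
      simp [single] at this)

end Helpers

/-- The tensor-rank bound (Kruskal): for a non-zero rank-metric code `C` of dimension
`k` and minimum distance `d`, `trk(C) ≥ k + d - 1`. -/
theorem tensorRank_bound {F : Type*} [Field F] [Fintype F] {n m : ℕ}
    (C : Submodule F (Matrix (Fin n) (Fin m) F)) (hC : C ≠ ⊥) :
    Module.finrank F C + minRankDist C - 1 ≤ trkCode C := by
  classical
  set k := Module.finrank F C with hk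
  set d := minRankDist C with hd
  set R := trkCode C with hR
  -- a nonzero element of C
  obtain ⟨M₀, hM₀C, hM₀⟩ := Submodule.exists_mem_ne_zero_of_ne_bot hC
  -- the distance set is nonempty; d is attained and positive
  have hd_le : ∀ M ∈ C, M ≠ 0 → d ≤ M.rank := fun M hM hMne =>
    Nat.sInf_le ⟨M, hM, hMne, rfl⟩
  have hd1 : 1 ≤ d := by
    obtain ⟨M, hM, hMne, hMr⟩ := Nat.sInf_mem (⟨M₀.rank, M₀, hM₀C, hM₀, rfl⟩ :
      Set.Nonempty {r : ℕ | ∃ M ∈ C, M ≠ 0 ∧ M.rank = r})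
    rw [hd]; show 1 ≤ minRankDist C
    calc 1 ≤ M.rank := myrank_pos hMne
    _ = minRankDist C := hMr
  -- the trk set is nonempty
  have htrk_ne : {R : ℕ | ∃ A : Fin R → Matrix (Fin n) (Fin m) F,
      (∀ r, (A r).rank = 1) ∧ C ≤ Submodule.span F (Set.range A)}.Nonempty := by
    refine ⟨n * m, fun r => single (finProdFinEquiv.symm r).1 (finProdFinEquiv.symm r).2 1,
      fun r => myrank_stdBasisMatrix _ _, ?_⟩
    have hsur := finProdFinEquiv.symm.surjective.range_comp
      (fun p : Fin n × Fin m => single (α := F) p.1 p.2 1)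
    rw [show (fun r : Fin (n * m) =>
        single (α := F) (finProdFinEquiv.symm r).1 (finProdFinEquiv.symm r).2 1) =
        (fun p : Fin n × Fin m => single (α := F) p.1 p.2 1) ∘ finProdFinEquiv.symm
        from rfl, hsur]
    intro x hx
    rw [show x = ∑ i : Fin n, ∑ j : Fin m, single i j (x i j) from
      matrix_eq_sum_single x]
    apply Submodule.sum_mem; intro i _
    apply Submodule.sum_mem; intro j _
    rw [show single i j (x i j) = x i j • single i j (1 : F) by
      rw [smul_single, smul_eq_mul, mul_one]]
    exact Submodule.smul_mem _ _ (Submodule.subset_span ⟨(i, j), rfl⟩)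
  obtain ⟨A, hA1, hspan⟩ := Nat.sInf_mem htrk_ne
  -- case R < d - 1 is impossible
  rcases lt_or_ge R (d - 1) with hRd | hRd
  · exfalso
    obtain ⟨c₀, hc₀⟩ := (Submodule.mem_span_range_iff_exists_fun F).mp (hspan hM₀C)
    have : M₀.rank ≤ R := by
      rw [← hc₀]
      calc (∑ r, c₀ r • A r).rank ≤ ∑ _r : Fin R, 1 :=
        myrank_sum_le _ _ _ (fun r _ => le_trans (myrank_smul_le _ _) (le_of_eq (hA1 r)))
      _ = R := by simp
    have := hd_le M₀ hM₀C hM₀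
    omega
  -- main case
  have hfd : FiniteDimensional F (Matrix (Fin n) (Fin m) F) := by infer_instance
  let b : Module.Basis (Fin k) F C := Module.finBasis F C
  choose c hc using fun i => (Submodule.mem_span_range_iff_exists_fun F).mp (hspan (b i).2)
  let g : (Fin k → F) →ₗ[F] (Fin R → F) := Fintype.linearCombination F c
  let e : Fin (R - (d - 1)) → Fin R := Fin.castLE (by omega)
  let h : (Fin k → F) →ₗ[F] (Fin (R - (d - 1)) → F) := (LinearMap.funLeft F F e).comp g
  have hinj : Function.Injective h := by
    rw [← LinearMap.ker_eq_bot, LinearMap.ker_eq_bot']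
    intro x hx
    by_contra hxne
    set y : Fin R → F := g x with hy
    have hy0 : ∀ r : Fin R, (r : ℕ) < R - (d - 1) → y r = 0 := by
      intro r hr
      have := congrFun hx ⟨r, hr⟩
      simpa [h, LinearMap.funLeft, e, Fin.castLE] using this
    set M : Matrix (Fin n) (Fin m) F := ∑ r, y r • A r with hM
    have hMeq : M = ((∑ i, x i • b i : C) : Matrix (Fin n) (Fin m) F) := by
      have hyr : ∀ r, y r = ∑ i, x i * c i r := by
        intro r
        change (∑ i, x i • c i : Fin R → F) r = _
        exact Finset.sum_apply _ _ _
      calc M = ∑ r, (∑ i, x i * c i r) • A r := by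
            rw [hM]; exact Finset.sum_congr rfl (fun r _ => by rw [hyr r])
      _ = ∑ r, ∑ i, (x i * c i r) • A r := by
            exact Finset.sum_congr rfl (fun r _ => Finset.sum_smul)
      _ = ∑ i, ∑ r, (x i * c i r) • A r := Finset.sum_comm
      _ = ∑ i, x i • ∑ r, c i r • A r := by
            refine Finset.sum_congr rfl fun i _ => ?_
            rw [Finset.smul_sum]
            exact Finset.sum_congr rfl fun r _ => by rw [smul_smul]
      _ = ∑ i, x i • ((b i : Matrix (Fin n) (Fin m) F)) :=
            Finset.sum_congr rfl fun i _ => by rw [hc i]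
      _ = _ := by
            rw [AddSubmonoidClass.coe_finset_sum]
            exact Finset.sum_congr rfl fun i _ => rfl
    have hMne : M ≠ 0 := by
      rw [hMeq]
      simp only [ne_eq, ZeroMemClass.coe_eq_zero]
      intro hzero
      apply hxne
      have := Fintype.linearIndependent_iff.mp b.linearIndependent x (by
        simpa using hzero)
      funext i; exact this i
    have hMC : M ∈ C := by rw [hMeq]; exact (∑ i, x i • b i : C).2
    have hrank : M.rank ≤ d - 1 := by
      rw [hM]
      calc (∑ r, y r • A r).rank ≤ ∑ r : Fin R, (if R - (d-1) ≤ (r:ℕ) then 1 else 0) := by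
            apply myrank_sum_le
            intro r _
            by_cases hr : R - (d-1) ≤ (r:ℕ)
            · simpa [hr] using le_trans (myrank_smul_le _ _) (le_of_eq (hA1 r))
            · rw [if_neg hr, hy0 r (by omega), zero_smul]
              simp [Matrix.rank_zero]
      _ = (Finset.univ.filter (fun r : Fin R => R - (d-1) ≤ (r:ℕ))).card := by
            rw [Finset.sum_boole]
            simp
      _ ≤ d - 1 := by
            have hcard : (Finset.univ.filter (fun r : Fin R => R - (d-1) ≤ (r:ℕ))).card ≤
                (Finset.range (d-1)).card := by
              refine Finset.card_le_card_of_injOn (fun r => (r : ℕ) - (R - (d-1))) ?_ ?_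
              · intro r hr
                simp only [Finset.mem_coe, Finset.mem_filter, Finset.mem_univ, true_and] at hr
                simp only [Finset.mem_coe, Finset.mem_range]
                have := r.2
                omega
              · intro r hr s hs hrs
                simp only [Finset.coe_filter, Set.mem_setOf_eq] at hr hs
                have hrs' : (r : ℕ) - (R - (d-1)) = (s : ℕ) - (R - (d-1)) := hrs
                have : (r : ℕ) = (s : ℕ) := by omega
                exact Fin.ext this
            rwa [Finset.card_range] at hcard
    have := hd_le M hMC hMne
    omega
  have hle := LinearMap.finrank_le_finrank_of_injective hinj
  rw [Module.finrank_fin_fun, Module.finrank_fin_fun] at hle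
  omega
end

section
/- Let q be a prime power, let d ≤ n, m < R be positive integers, let C ⊆ 𝔽_q^R be a non-zero linear code, and let V ∈ 𝔽_q^{n×R}, W ∈ 𝔽_q^{m×R}. The following are equivalent: (1) rank(V · diag(c) · Wᵀ) ≥ d for every non-zero c ∈ C; (2) dim(C_V ∩ C_{W_c}^⊥) ≤ rank(V) − d for every non-zero c ∈ C; (3) dim(C_W ∩ C_{V_c}^⊥) ≤ rank(W) − d for every non-zero c ∈ C. Here C_V, C_W are the row spaces of V, W, and C_{W_c}, C_{V_c} are the row spaces of W·diag(c), V·diag(c). -/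
open Matrix

/-- The row space of a matrix: the span of its rows. -/
def rowSpace {F : Type*} [Field F] {n R : ℕ} (V : Matrix (Fin n) (Fin R) F) :
    Submodule F (Fin R → F) :=
  Submodule.span F (Set.range V)

/-- The orthogonal complement of a subspace of `F^R` with respect to the standard
dot product. -/
def dotPerp {F : Type*} [Field F] {R : ℕ} (U : Submodule F (Fin R → F)) :
    Submodule F (Fin R → F) where
  carrier := {x | ∀ u ∈ U, x ⬝ᵥ u = 0}
  zero_mem' := fun u _ => by simp
  add_mem' := fun {x y} hx hy u hu => by
    simp [add_dotProduct, hx u hu, hy u hu]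
  smul_mem' := fun c x hx u hu => by
    simp [smul_dotProduct, hx u hu]

section aux
variable {F : Type*} [Field F] {n m R : ℕ}

lemma vecMul_DWt (W : Matrix (Fin m) (Fin R) F) (c : Fin R → F) (x : Fin R → F) (j : Fin m) :
    (x ᵥ* (Matrix.diagonal c * Wᵀ)) j = x ⬝ᵥ (W * Matrix.diagonal c) j := by
  have hT : Matrix.diagonal c * Wᵀ = (W * Matrix.diagonal c)ᵀ := by
    rw [Matrix.transpose_mul, Matrix.diagonal_transpose]
  rw [hT, Matrix.vecMul_transpose, Matrix.mulVec, dotProduct_comm]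

lemma ker_vecMulLinear_eq (W : Matrix (Fin m) (Fin R) F) (c : Fin R → F) :
    LinearMap.ker ((Matrix.diagonal c * Wᵀ).vecMulLinear) =
      dotPerp (rowSpace (W * Matrix.diagonal c)) := by
  ext x
  constructor
  · intro hx u hu
    have h0 : x ᵥ* (Matrix.diagonal c * Wᵀ) = 0 := hx
    induction hu using Submodule.span_induction with
    | mem u hu =>
      obtain ⟨j, rfl⟩ := hu
      rw [← vecMul_DWt, h0]; rfl
    | zero => simp
    | add u v _ _ hu hv => simp [dotProduct_add, hu, hv]
    | smul a u _ hu => simp [dotProduct_smul, hu]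
  · intro hx
    show x ᵥ* (Matrix.diagonal c * Wᵀ) = 0
    funext j
    rw [vecMul_DWt]
    exact hx _ (Submodule.subset_span ⟨j, rfl⟩)

lemma rowSpace_mul (V : Matrix (Fin n) (Fin R) F) (M : Matrix (Fin R) (Fin m) F) :
    rowSpace (V * M) = Submodule.map M.vecMulLinear (rowSpace V) := by
  unfold rowSpace
  rw [Submodule.map_span]
  congr 1
  exact Set.range_comp (⇑M.vecMulLinear) V


lemma finrank_map_add (g : (Fin R → F) →ₗ[F] (Fin m → F)) (p : Submodule F (Fin R → F)) :
    Module.finrank F (Submodule.map g p) + Module.finrank F ↥(p ⊓ LinearMap.ker g) =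
      Module.finrank F p := by
  have h := LinearMap.finrank_range_add_finrank_ker (g.comp p.subtype)
  rw [LinearMap.range_comp, Submodule.range_subtype, LinearMap.ker_comp] at h
  have h3 : Module.finrank F ↥(p ⊓ LinearMap.ker g)
      = Module.finrank F ↥(Submodule.comap p.subtype (LinearMap.ker g)) := by
    rw [← Submodule.map_comap_subtype, Submodule.finrank_map_subtype_eq]
  rw [← h3] at h
  exact h

lemma key (V : Matrix (Fin n) (Fin R) F) (W : Matrix (Fin m) (Fin R) F) (c : Fin R → F) :
    (V * Matrix.diagonal c * Wᵀ).rank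
      + Module.finrank F ↥(rowSpace V ⊓ dotPerp (rowSpace (W * Matrix.diagonal c)))
      = V.rank := by
  have h1 : (V * Matrix.diagonal c * Wᵀ).rank
      = Module.finrank F (rowSpace (V * Matrix.diagonal c * Wᵀ)) :=
    Matrix.rank_eq_finrank_span_row _
  have h2 : V.rank = Module.finrank F (rowSpace V) := Matrix.rank_eq_finrank_span_row _
  rw [h1, h2, Matrix.mul_assoc, rowSpace_mul, ← ker_vecMulLinear_eq]
  exact finrank_map_add _ _
end aux

/-- Characterizations of extremality of a triple `(C, V, W)`: the rank condition
`rank(V diag(c) Wᵀ) ≥ d` for non-zero `c ∈ C` is equivalent to the two intersection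
conditions. -/
theorem extremal_triple_tfae {F : Type*} [Field F] [Fintype F] {n m R d : ℕ}
    (hd : 0 < d) (hdn : d ≤ n) (hdm : d ≤ m) (hnR : n < R) (hmR : m < R)
    (C : Submodule F (Fin R → F)) (hC : C ≠ ⊥)
    (V : Matrix (Fin n) (Fin R) F) (W : Matrix (Fin m) (Fin R) F) :
    List.TFAE [
      ∀ c ∈ C, c ≠ 0 → d ≤ (V * Matrix.diagonal c * Wᵀ).rank,
      ∀ c ∈ C, c ≠ 0 →
        (Module.finrank F ↥(rowSpace V ⊓ dotPerp (rowSpace (W * Matrix.diagonal c))) : ℤ)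
          ≤ (V.rank : ℤ) - d,
      ∀ c ∈ C, c ≠ 0 →
        (Module.finrank F ↥(rowSpace W ⊓ dotPerp (rowSpace (V * Matrix.diagonal c))) : ℤ)
          ≤ (W.rank : ℤ) - d] := by
  have hr : ∀ c : Fin R → F, (W * Matrix.diagonal c * Vᵀ).rank
      = (V * Matrix.diagonal c * Wᵀ).rank := by
    intro c
    have ht : (V * Matrix.diagonal c * Wᵀ)ᵀ = W * Matrix.diagonal c * Vᵀ := by
      rw [Matrix.transpose_mul, Matrix.transpose_mul, Matrix.diagonal_transpose,
        Matrix.transpose_transpose, Matrix.mul_assoc]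
    rw [← ht, Matrix.rank_transpose]
  tfae_have 1 ↔ 2 := by
    constructor <;> intro h c hc hc0 <;> have hk := key V W c <;> have := h c hc hc0 <;> omega
  tfae_have 1 ↔ 3 := by
    constructor <;> intro h c hc hc0 <;> have hk := key W V c <;> have hrc := hr c <;>
      have := h c hc hc0 <;> omega
  tfae_finish
end

section
/- Let q be a prime power and let k, d, n, m, R be positive integers with d ≤ n, m < R and n + m ≥ R + d. Let C ⊆ 𝔽_q^R be a non-zero linear code of minimum Hamming distance at least d, and let V ∈ 𝔽_q^{n×R}, W ∈ 𝔽_q^{m×R} be matrices whose row spaces are MDS codes (i.e., rank(V) = n, every non-zero vector of rowsp(V) has Hamming weight ≥ R − n + 1, rank(W) = m, and every non-zero vector of rowsp(W) has Hamming weight ≥ R − m + 1). Then rank(V · diag(c) · Wᵀ) ≥ d for every non-zero c ∈ C. -/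
open Matrix

section Aux

open Module

variable {F : Type*} [Field F]

/-- Sylvester's rank inequality for matrices over a field. -/
lemma sylvester_rank_ineq {l m o : Type*} [Fintype l] [Fintype m] [Fintype o]
    (A : Matrix l m F) (B : Matrix m o F) :
    A.rank + B.rank ≤ (A * B).rank + Fintype.card m := by
  classical
  have hfg : (A * B).mulVecLin = A.mulVecLin ∘ₗ B.mulVecLin := Matrix.mulVecLin_mul A B
  set f := A.mulVecLin with hf
  set g := B.mulVecLin with hg
  set h : ↥(LinearMap.range g) →ₗ[F] (l → F) := f ∘ₗ (LinearMap.range g).subtype with hh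
  have hrange : LinearMap.range h = LinearMap.range (f ∘ₗ g) := by
    rw [hh, LinearMap.range_comp, LinearMap.range_comp, Submodule.range_subtype]
  have hrn := LinearMap.finrank_range_add_finrank_ker h
  have hrnf := LinearMap.finrank_range_add_finrank_ker f
  rw [Module.finrank_fintype_fun_eq_card] at hrnf
  -- finrank (ker h) ≤ finrank (ker f)
  have hmem : ∀ x : ↥(LinearMap.ker h),
      ((LinearMap.range g).subtype ∘ₗ (LinearMap.ker h).subtype) x ∈ LinearMap.ker f := by
    intro x
    have hx : h ↑x = 0 := x.2
    exact hx
  set φ : ↥(LinearMap.ker h) →ₗ[F] ↥(LinearMap.ker f) :=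
    LinearMap.codRestrict (LinearMap.ker f)
      ((LinearMap.range g).subtype ∘ₗ (LinearMap.ker h).subtype) hmem with hφ
  have hinj : Function.Injective φ := by
    intro a b hab
    have h1 : (((a : ↥(LinearMap.range g)) : m → F)) = ((b : ↥(LinearMap.range g)) : m → F) := by
      have := congrArg Subtype.val hab
      simpa [hφ] using this
    exact Subtype.ext (Subtype.ext h1)
  have hker : finrank F (LinearMap.ker h) ≤ finrank F (LinearMap.ker f) :=
    LinearMap.finrank_le_finrank_of_injective hinj
  have e1 : A.rank = finrank F (LinearMap.range f) := rfl
  have e2 : B.rank = finrank F (LinearMap.range g) := rfl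
  have e3 : (A * B).rank = finrank F (LinearMap.range h) := by
    rw [hrange, ← hfg]; rfl
  omega

/-- If the transpose map of a matrix has full rank equal to the column count,
its `mulVecLin` is injective. -/
lemma inj_of_rank_eq_card {ι κ : Type*} [Fintype ι] [Fintype κ] (M : Matrix ι κ F)
    (h : M.rank = Fintype.card κ) : Function.Injective M.mulVecLin := by
  rw [← LinearMap.ker_eq_bot]
  have h1 := LinearMap.finrank_range_add_finrank_ker M.mulVecLin
  rw [Module.finrank_fintype_fun_eq_card] at h1
  have h2 : finrank F (LinearMap.range M.mulVecLin) = M.rank := rfl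
  have h0 : finrank F (LinearMap.ker M.mulVecLin) = 0 := by omega
  exact Submodule.finrank_eq_zero.mp h0

variable [DecidableEq F] {n R : ℕ}

/-- A vector in the row space of `V` which vanishes on `T` has Hamming norm at most
`R - T.card`. -/
lemma hammingNorm_le_of_vanish (v : Fin R → F) (T : Finset (Fin R))
    (hv : ∀ k ∈ T, v k = 0) : hammingNorm v ≤ R - T.card := by
  have hsub : ({i | v i ≠ 0} : Finset (Fin R)) ⊆ Finset.univ \ T := by
    intro k hk
    simp only [ne_eq, Finset.mem_filter, Finset.mem_univ, true_and] at hk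
    simp only [Finset.mem_sdiff, Finset.mem_univ, true_and]
    intro hkT
    exact hk (hv k hkT)
  have h1 := Finset.card_le_card hsub
  rw [Finset.card_sdiff_of_subset (Finset.subset_univ T), Finset.card_univ, Fintype.card_fin] at h1
  exact h1

/-- Core injectivity: for an MDS generator matrix `V` and a set `T` of at least `n`
columns, the transpose of the column-submatrix has injective `mulVecLin`. -/
lemma mds_transpose_inj (V : Matrix (Fin n) (Fin R) F)
    (hVrank : V.rank = n)
    (hVmds : ∀ v ∈ rowSpace V, v ≠ 0 → R - n + 1 ≤ hammingNorm v)
    (hnR : n ≤ R) (T : Finset (Fin R)) (hT : n ≤ T.card) :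
    Function.Injective ((V.submatrix id (fun k : ↥T => (k : Fin R)))ᵀ).mulVecLin := by
  classical
  have hTR : T.card ≤ R := by
    simpa [Fintype.card_fin] using Finset.card_le_univ T
  have hVTrank : Vᵀ.rank = n := by rw [Matrix.rank_transpose]; exact hVrank
  have hVTinj : Function.Injective Vᵀ.mulVecLin :=
    inj_of_rank_eq_card Vᵀ (by simpa [Fintype.card_fin] using hVTrank)
  rw [← LinearMap.ker_eq_bot, LinearMap.ker_eq_bot']
  intro x hx
  by_contra hx0
  set v : Fin R → F := Vᵀ.mulVec x with hv
  have hv0 : v ≠ 0 := by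
    intro h0
    apply hx0
    apply hVTinj
    have h0' : Vᵀ.mulVecLin x = 0 := by rw [Matrix.mulVecLin_apply]; exact h0
    rw [h0', map_zero]
  have hvmem : v ∈ rowSpace V := by
    have : v ∈ LinearMap.range Vᵀ.mulVecLin := ⟨x, rfl⟩
    rw [Matrix.range_mulVecLin] at this; exact this
  have hvanish : ∀ k ∈ T, v k = 0 := by
    intro k hk
    have h1 : ((V.submatrix id (fun k : ↥T => (k : Fin R)))ᵀ).mulVecLin x ⟨k, hk⟩ = 0 :=
      congrFun hx ⟨k, hk⟩
    rw [Matrix.mulVecLin_apply] at h1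
    show Vᵀ.mulVec x k = 0
    rw [← h1]
    simp [Matrix.mulVec, dotProduct]
  have h1 := hVmds v hvmem hv0
  have h2 := hammingNorm_le_of_vanish v T hvanish
  omega

/-- For an MDS generator matrix, any column-submatrix on `T` with `n ≤ |T|` has rank `n`. -/
lemma mds_submatrix_rank_of_le (V : Matrix (Fin n) (Fin R) F)
    (hVrank : V.rank = n)
    (hVmds : ∀ v ∈ rowSpace V, v ≠ 0 → R - n + 1 ≤ hammingNorm v)
    (hnR : n ≤ R) (T : Finset (Fin R)) (hT : n ≤ T.card) :
    (V.submatrix id (fun k : ↥T => (k : Fin R))).rank = n := by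
  classical
  have hinj := mds_transpose_inj V hVrank hVmds hnR T hT
  have h1 : ((V.submatrix id (fun k : ↥T => (k : Fin R)))ᵀ).rank = n := by
    have := LinearMap.finrank_range_of_inj hinj
    rw [Module.finrank_fintype_fun_eq_card, Fintype.card_fin] at this
    exact this
  rw [← Matrix.rank_transpose]
  exact h1

/-- MDS column lemma: the rank of the column-submatrix on any set `S` is at least
`min n S.card`. -/
lemma mds_submatrix_rank_ge (V : Matrix (Fin n) (Fin R) F)
    (hVrank : V.rank = n)
    (hVmds : ∀ v ∈ rowSpace V, v ≠ 0 → R - n + 1 ≤ hammingNorm v)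
    (hnR : n ≤ R) (S : Finset (Fin R)) :
    min n S.card ≤ (V.submatrix id (fun k : ↥S => (k : Fin R))).rank := by
  classical
  rcases le_total n S.card with hns | hsn
  · rw [mds_submatrix_rank_of_le V hVrank hVmds hnR S hns]
    exact min_le_left _ _
  · -- extend S to a set T of size n
    obtain ⟨T, hST, hTcard⟩ := Finset.exists_superset_card_eq hsn
      (by simpa [Fintype.card_fin] using hnR)
    have hNrank : (V.submatrix id (fun k : ↥T => (k : Fin R))).rank = n :=
      mds_submatrix_rank_of_le V hVrank hVmds hnR T (le_of_eq hTcard.symm)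
    set N := V.submatrix id (fun k : ↥T => (k : Fin R)) with hN
    have hNinj : Function.Injective N.mulVecLin := by
      apply inj_of_rank_eq_card
      rw [hNrank, Fintype.card_coe, hTcard]
    -- now show the columns of the S-submatrix are independent
    set M := V.submatrix id (fun k : ↥S => (k : Fin R)) with hM
    have hMinj : Function.Injective M.mulVecLin := by
      rw [← LinearMap.ker_eq_bot, LinearMap.ker_eq_bot']
      intro z hz
      set gfun : Fin R → F := fun k => if h : k ∈ S then z ⟨k, h⟩ else 0 with hgfun
      have hzg : z = fun k : ↥S => gfun (k : Fin R) := by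
        funext k
        simp [hgfun, k.2]
      have hMz : ∀ i, M.mulVec z i = ∑ k ∈ S, V i k * gfun k := by
        intro i
        rw [hzg]
        rw [show M.mulVec (fun k : ↥S => gfun (k : Fin R)) i
            = ∑ k : ↥S, V i (k : Fin R) * gfun (k : Fin R) from rfl]
        exact Finset.sum_coe_sort S (fun k => V i k * gfun k)
      have hNz : N.mulVec (fun k : ↥T => gfun (k : Fin R)) = 0 := by
        funext i
        have e : N.mulVec (fun k : ↥T => gfun (k : Fin R)) i
            = ∑ k ∈ T, V i k * gfun k :=
          Finset.sum_coe_sort T (fun k => V i k * gfun k)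
        have e2 : ∑ k ∈ T, V i k * gfun k = ∑ k ∈ S, V i k * gfun k := by
          symm
          apply Finset.sum_subset hST
          intro k _ hkS
          simp [hgfun, hkS]
        have e3 : M.mulVec z = 0 := by
          rw [← Matrix.mulVecLin_apply]; exact hz
        rw [e, e2, ← hMz i, congrFun e3 i]
      have hg0 : (fun k : ↥T => gfun (k : Fin R)) = 0 := by
        apply hNinj
        simpa [Matrix.mulVecLin_apply] using hNz
      funext k
      have hkT : (k : Fin R) ∈ T := hST k.2
      have := congrFun hg0 ⟨k, hkT⟩
      simp only [Pi.zero_apply] at this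
      rw [hzg]
      exact this
    have : M.rank = S.card := by
      have := LinearMap.finrank_range_of_inj hMinj
      rw [Module.finrank_fintype_fun_eq_card, Fintype.card_coe] at this
      exact this
    rw [this]
    exact min_le_right _ _

end Aux

/-- If `d ≤ n, m < R`, `n + m ≥ R + d`, the row spaces of `V` and `W` are MDS codes, and
`C` is a non-zero code of minimum Hamming distance at least `d`, then
`rank(V diag(c) Wᵀ) ≥ d` for every non-zero `c ∈ C`, i.e. `(C, V, W)` is an extremal
triple. -/
theorem extremal_triple_of_MDS_rowspaces {F : Type*} [Field F] [Fintype F]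
    [DecidableEq F] {n m R d : ℕ}
    (hd : 0 < d) (hdn : d ≤ n) (hdm : d ≤ m) (hnR : n < R) (hmR : m < R)
    (hsum : R + d ≤ n + m)
    (C : Submodule F (Fin R → F)) (hC : C ≠ ⊥)
    (hCd : ∀ c ∈ C, c ≠ 0 → d ≤ hammingNorm c)
    (V : Matrix (Fin n) (Fin R) F) (W : Matrix (Fin m) (Fin R) F)
    (hVrank : V.rank = n)
    (hVmds : ∀ v ∈ rowSpace V, v ≠ 0 → R - n + 1 ≤ hammingNorm v)
    (hWrank : W.rank = m)
    (hWmds : ∀ w ∈ rowSpace W, w ≠ 0 → R - m + 1 ≤ hammingNorm w) :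
    ∀ c ∈ C, c ≠ 0 → d ≤ (V * Matrix.diagonal c * Wᵀ).rank := by
  classical
  intro c hcC hc0
  set S : Finset (Fin R) := {i | c i ≠ 0} with hS
  have hwnorm : hammingNorm c = S.card := rfl
  have hdw : d ≤ S.card := by rw [← hwnorm]; exact hCd c hcC hc0
  have hwR : S.card ≤ R := by simpa [Fintype.card_fin] using Finset.card_le_univ S
  set V' := V.submatrix id (fun k : ↥S => (k : Fin R)) with hV'
  set W' := W.submatrix id (fun k : ↥S => (k : Fin R)) with hW'
  set c' : ↥S → F := fun k => c (k : Fin R) with hc'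
  -- the key identity
  have hkey : V * Matrix.diagonal c * Wᵀ = V' * Matrix.diagonal c' * W'ᵀ := by
    ext i j
    rw [Matrix.mul_apply, Matrix.mul_apply]
    simp only [Matrix.mul_diagonal, Matrix.transpose_apply, hV', hW', hc',
      Matrix.submatrix_apply, id_eq]
    rw [Finset.sum_coe_sort S (fun k => V i k * c k * W j k)]
    symm
    apply Finset.sum_subset (Finset.subset_univ S)
    intro k _ hkS
    have : c k = 0 := by
      by_contra h
      exact hkS (by simp [hS, h])
    simp [this]
  rw [hkey]
  have hcne : ∀ k : ↥S, c' k ≠ 0 := by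
    intro k
    have := k.2
    simp only [hS, Finset.mem_filter, Finset.mem_univ, true_and] at this
    exact this
  have hdet : IsUnit (Matrix.diagonal c').det := by
    rw [Matrix.det_diagonal]
    exact isUnit_iff_ne_zero.mpr (Finset.prod_ne_zero_iff.mpr fun k _ => hcne k)
  have hrankB : (Matrix.diagonal c' * W'ᵀ).rank = W'ᵀ.rank :=
    Matrix.rank_mul_eq_right_of_isUnit_det _ _ hdet
  have hrankWT : W'ᵀ.rank = W'.rank := Matrix.rank_transpose W'
  have hV'rank : min n S.card ≤ V'.rank :=
    mds_submatrix_rank_ge V hVrank hVmds (le_of_lt hnR) S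
  have hW'rank : min m S.card ≤ W'.rank :=
    mds_submatrix_rank_ge W hWrank hWmds (le_of_lt hmR) S
  have hsyl := sylvester_rank_ineq V' (Matrix.diagonal c' * W'ᵀ)
  rw [Fintype.card_coe, hrankB, hrankWT] at hsyl
  rw [Matrix.mul_assoc] at *
  have hrankle : V'.rank ≤ S.card := by
    have := Matrix.rank_le_card_width V'
    simpa [Fintype.card_coe] using this
  omega
end

section
/- Let q be a prime power and let 0 < d < k be integers with R := k + d − 1 ≤ q. Let α_1, …, α_R ∈ 𝔽_q be pairwise distinct, and let f ∈ 𝔽_q[x] be an irreducible polynomial of degree k. Let V ∈ 𝔽_q^{k×R} be a matrix of rank k such that V · (f(α_1)μ(α_1), …, f(α_R)μ(α_R))ᵀ = 0 for every polynomial μ ∈ 𝔽_q[x] of degree < d − 1, and let W ∈ 𝔽_q^{d×R} be a matrix of rank d whose row space equals {(λ(α_1), …, λ(α_R)) : λ ∈ 𝔽_q[x], deg λ < d}. Then for every non-zero polynomial g ∈ 𝔽_q[x] of degree < k, setting c = (g(α_1), …, g(α_R)), the matrix V · diag(c) · Wᵀ ∈ 𝔽_q^{k×d} has rank ≥ d.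 Consequently, {V·diag((g(α_i))_i)·Wᵀ : g ∈ 𝔽_q[x], deg g < k} is a k-dimensional rank-metric code in 𝔽_q^{k×d} with minimum rank distance d and tensor rank k + d − 1, i.e., an MTR code. -/
open Matrix Polynomial

section Aux
variable {F : Type*} [Field F]

lemma aux_eval_zero_on {R : ℕ} (α : Fin R → F) (hα : Function.Injective α)
    (s : Finset (Fin R)) (p : F[X]) (hdeg : p.degree < (s.card : ℕ))
    (h : ∀ i ∈ s, p.eval (α i) = 0) : p = 0 := by
  classical
  apply Polynomial.eq_zero_of_degree_lt_of_eval_finset_eq_zero (s.image α)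
  · rwa [Finset.card_image_of_injective _ hα]
  · intro x hx
    obtain ⟨i, hi, rfl⟩ := Finset.mem_image.mp hx
    exact h i hi

lemma aux_eval_inj {R : ℕ} (α : Fin R → F) (hα : Function.Injective α)
    (p : F[X]) (hdeg : p.degree < (R : ℕ)) (h : ∀ i, p.eval (α i) = 0) : p = 0 := by
  apply aux_eval_zero_on α hα Finset.univ p
  · simpa using hdeg
  · intro i _; exact h i

lemma aux_rank_eq_zero {n m : ℕ} {M : Matrix (Fin n) (Fin m) F} (h : M.rank = 0) : M = 0 := by
  rw [Matrix.rank, Submodule.finrank_eq_zero] at h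
  rw [LinearMap.range_eq_bot] at h
  ext i j
  have := congrFun (congrFun (congrArg DFunLike.coe h) (Pi.single j 1)) i
  simpa [Matrix.mulVecLin_apply] using this

lemma aux_rank_smul_le {n m : ℕ} (c : F) (M : Matrix (Fin n) (Fin m) F) :
    (c • M).rank ≤ M.rank := by
  apply Submodule.finrank_mono
  rintro _ ⟨x, rfl⟩
  exact ⟨c • x, by simp [Matrix.mulVecLin_apply, Matrix.smul_mulVec, Matrix.mulVec_smul]⟩

lemma aux_rank_add_le {n m : ℕ} (A B : Matrix (Fin n) (Fin m) F) :
    (A + B).rank ≤ A.rank + B.rank := by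
  have hle : LinearMap.range (A + B).mulVecLin ≤
      LinearMap.range A.mulVecLin ⊔ LinearMap.range B.mulVecLin := by
    rintro _ ⟨x, rfl⟩
    exact Submodule.mem_sup.mpr ⟨A.mulVec x, ⟨x, rfl⟩, B.mulVec x, ⟨x, rfl⟩,
      by simp [Matrix.mulVecLin_apply, Matrix.add_mulVec]⟩
  exact le_trans (Submodule.finrank_mono hle)
    (Submodule.finrank_add_le_finrank_add_finrank _ _)

lemma aux_rank_sum_le {n m : ℕ} {ι : Type*} (s : Finset ι) (M : ι → Matrix (Fin n) (Fin m) F) :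
    (∑ i ∈ s, M i).rank ≤ ∑ i ∈ s, (M i).rank := by
  classical
  induction s using Finset.cons_induction with
  | empty => simp
  | cons a s ha ih =>
    rw [Finset.sum_cons, Finset.sum_cons]
    exact le_trans (aux_rank_add_le _ _) (add_le_add le_rfl ih)

lemma aux_rank_lc_le [DecidableEq F] {n m T : ℕ} (A : Fin T → Matrix (Fin n) (Fin m) F)
    (hA : ∀ r, (A r).rank ≤ 1) (c : Fin T → F) :
    (∑ i, c i • A i).rank ≤ (Finset.univ.filter (fun i => c i ≠ 0)).card := by
  classical
  have hsum : ∑ i, c i • A i = ∑ i ∈ Finset.univ.filter (fun i => c i ≠ 0), c i • A i := by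
    symm
    apply Finset.sum_subset (Finset.subset_univ _)
    intro i _ hi
    simp only [Finset.mem_filter, Finset.mem_univ, true_and, not_not] at hi
    simp [hi]
  rw [hsum]
  calc (∑ i ∈ Finset.univ.filter (fun i => c i ≠ 0), c i • A i).rank
      ≤ ∑ i ∈ Finset.univ.filter (fun i => c i ≠ 0), (c i • A i).rank := aux_rank_sum_le _ _
    _ ≤ ∑ _i ∈ Finset.univ.filter (fun i => c i ≠ 0), 1 :=
        Finset.sum_le_sum fun i _ => le_trans (aux_rank_smul_le _ _) (hA i)
    _ = (Finset.univ.filter (fun i => c i ≠ 0)).card := by simp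

lemma aux_vecMulVec_mulVec {n m : ℕ} (u : Fin n → F) (v : Fin m → F) (x : Fin m → F) :
    (vecMulVec u v).mulVec x = (∑ j, v j * x j) • u := by
  ext i
  simp only [Matrix.mulVec, dotProduct, vecMulVec_apply, Pi.smul_apply, smul_eq_mul,
    Finset.sum_mul]
  exact Finset.sum_congr rfl fun j _ => by ring

lemma aux_rank_vecMulVec {n m : ℕ} {u : Fin n → F} {v : Fin m → F}
    (hu : u ≠ 0) (hv : v ≠ 0) : (vecMulVec u v).rank = 1 := by
  have hle : (vecMulVec u v).rank ≤ 1 := by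
    have h : LinearMap.range (vecMulVec u v).mulVecLin ≤ F ∙ u := by
      rintro _ ⟨x, rfl⟩
      rw [Matrix.mulVecLin_apply, aux_vecMulVec_mulVec]
      exact Submodule.smul_mem _ _ (Submodule.mem_span_singleton_self u)
    calc (vecMulVec u v).rank ≤ Module.finrank F (F ∙ u) := Submodule.finrank_mono h
      _ = 1 := finrank_span_singleton hu
  have hne : vecMulVec u v ≠ 0 := by
    obtain ⟨a, ha⟩ := Function.ne_iff.mp hu
    obtain ⟨b, hb⟩ := Function.ne_iff.mp hv
    intro h
    have := congrFun (congrFun h a) b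
    simp only [vecMulVec_apply, Matrix.zero_apply] at this
    exact (mul_ne_zero ha hb) this
  have : (vecMulVec u v).rank ≠ 0 := fun h => hne (aux_rank_eq_zero h)
  omega

lemma aux_diagonal_mulVec {n : ℕ} (c w : Fin n → F) :
    (diagonal c).mulVec w = fun i => c i * w i := by
  classical
  ext i
  simp [Matrix.mulVec, dotProduct, diagonal_apply, ite_mul, Finset.sum_ite_eq]

end Aux

/-- The Cauchy-code construction of MTR codes (Theorem on extremal triples from
Reed–Solomon/Cauchy codes): with `R = k + d - 1 ≤ q`, pairwise distinct evaluation
points `α_i`, an irreducible `f` of degree `k`, `V` a parity check matrix of the Cauchy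
code `{(f(α_i) μ(α_i))_i : deg μ < d - 1}` and `W` a generator matrix of the
Reed–Solomon code `{(λ(α_i))_i : deg λ < d}`, every `V diag((g(α_i))_i) Wᵀ` with
`g ≠ 0` of degree `< k` has rank at least `d`; consequently the resulting code is a
`k`-dimensional MTR code in `𝔽_q^{k×d}` with minimum distance `d` and tensor rank
`k + d - 1`. -/
theorem cauchy_MTR_construction {F : Type*} [Field F] [Fintype F] {k d R : ℕ}
    (hd : 0 < d) (hdk : d < k) (hR : R = k + d - 1) (hRq : R ≤ Fintype.card F)
    (α : Fin R → F) (hα : Function.Injective α)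
    (f : Polynomial F) (hf : Irreducible f) (hfdeg : f.natDegree = k)
    (V : Matrix (Fin k) (Fin R) F) (hVrank : V.rank = k)
    (hV : ∀ μ : Polynomial F, μ.degree < ((d - 1 : ℕ) : WithBot ℕ) →
      V.mulVec (fun i => f.eval (α i) * μ.eval (α i)) = 0)
    (W : Matrix (Fin d) (Fin R) F) (hWrank : W.rank = d)
    (hW : (Submodule.span F (Set.range W) : Set (Fin R → F)) =
      {v | ∃ lam : Polynomial F, lam.degree < (d : ℕ) ∧ v = fun i => lam.eval (α i)}) :
    (∀ g : Polynomial F, g ≠ 0 → g.degree < (k : ℕ) →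
      d ≤ (V * Matrix.diagonal (fun i => g.eval (α i)) * Wᵀ).rank) ∧
    (∀ C' : Submodule F (Matrix (Fin k) (Fin d) F),
      (C' : Set (Matrix (Fin k) (Fin d) F)) =
        {M | ∃ g : Polynomial F, g.degree < (k : ℕ) ∧
          M = V * Matrix.diagonal (fun i => g.eval (α i)) * Wᵀ} →
      Module.finrank F C' = k ∧ minRankDist C' = d ∧ trkCode C' = k + d - 1) := by
  classical
  have hk2 : 2 ≤ k := by omega
  have hfne0 : f ≠ 0 := hf.ne_zero
  -- f has no roots in F
  have hfroot : ∀ a : F, f.eval a ≠ 0 := by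
    intro a ha
    have hdvd : (X - C a) ∣ f := dvd_iff_isRoot.mpr ha
    obtain ⟨c, hc⟩ := hdvd
    rcases hf.isUnit_or_isUnit hc with h | h
    · exact Polynomial.not_isUnit_X_sub_C a h
    · have hcne : c ≠ 0 := by
        intro h0; rw [h0, mul_zero] at hc; exact hfne0 hc
      have h1 : f.natDegree = 1 + 0 := by
        rw [hc, natDegree_mul (X_sub_C_ne_zero a) hcne, natDegree_X_sub_C,
          natDegree_eq_zero_of_isUnit h]
      omega
  -- the Cauchy code map
  let Φ : degreeLT F (d - 1) →ₗ[F] (Fin R → F) :=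
    { toFun := fun μ => fun i => f.eval (α i) * (μ : F[X]).eval (α i)
      map_add' := by
        intro a b; funext i
        simp only [Submodule.coe_add, eval_add, Pi.add_apply]
        ring
      map_smul' := by
        intro c a; funext i
        simp only [SetLike.val_smul, eval_smul, RingHom.id_apply, Pi.smul_apply, smul_eq_mul]
        ring }
  have hΦapp : ∀ (μ : degreeLT F (d - 1)) (i : Fin R),
      Φ μ i = f.eval (α i) * (μ : F[X]).eval (α i) := fun _ _ => rfl
  haveI : FiniteDimensional F (degreeLT F (d - 1)) :=
    (Polynomial.degreeLTEquiv F (d - 1)).symm.finiteDimensional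
  haveI : FiniteDimensional F (degreeLT F k) :=
    (Polynomial.degreeLTEquiv F k).symm.finiteDimensional
  have hΦinj : Function.Injective Φ := by
    rw [← LinearMap.ker_eq_bot, LinearMap.ker_eq_bot']
    intro μ hμ
    have hz : ∀ i, (μ : F[X]).eval (α i) = 0 := by
      intro i
      have := congrFun hμ i
      rw [hΦapp] at this
      rcases mul_eq_zero.mp this with h | h
      · exact absurd h (hfroot _)
      · exact h
    have hdeg : (μ : F[X]).degree < (R : ℕ) := by
      refine lt_of_lt_of_le (mem_degreeLT.mp μ.2) ?_
      exact_mod_cast (show (d - 1 : ℕ) ≤ R by omega)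
    have : (μ : F[X]) = 0 := aux_eval_inj α hα _ hdeg hz
    exact Subtype.ext this
  have hfrΦ : Module.finrank F (degreeLT F (d - 1)) = d - 1 := by
    rw [(Polynomial.degreeLTEquiv F (d - 1)).finrank_eq, Module.finrank_pi, Fintype.card_fin]
  -- kernel characterization
  have hrankV : Module.finrank F (LinearMap.range V.mulVecLin) = k := hVrank
  have hkerdim : Module.finrank F (LinearMap.ker V.mulVecLin) = d - 1 := by
    have h := LinearMap.finrank_range_add_finrank_ker V.mulVecLin
    rw [hrankV, Module.finrank_pi, Fintype.card_fin] at h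
    omega
  have hrangeΦ : LinearMap.range Φ = LinearMap.ker V.mulVecLin := by
    apply Submodule.eq_of_le_of_finrank_eq
    · rintro _ ⟨μ, rfl⟩
      rw [LinearMap.mem_ker, Matrix.mulVecLin_apply]
      exact hV (μ : F[X]) (mem_degreeLT.mp μ.2)
    · rw [LinearMap.finrank_range_of_inj hΦinj, hfrΦ, hkerdim]
  have hker : ∀ v : Fin R → F, V.mulVec v = 0 →
      ∃ μ : F[X], μ.degree < ((d - 1 : ℕ) : WithBot ℕ) ∧
        v = fun i => f.eval (α i) * μ.eval (α i) := by
    intro v hv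
    have : v ∈ LinearMap.range Φ := by
      rw [hrangeΦ, LinearMap.mem_ker, Matrix.mulVecLin_apply]
      exact hv
    obtain ⟨μ, hμ⟩ := this
    exact ⟨(μ : F[X]), mem_degreeLT.mp μ.2, by rw [← hμ]; rfl⟩
  -- W transpose injectivity
  have hWinj : ∀ x : Fin d → F, Wᵀ.mulVec x = 0 → x = 0 := by
    have hkerW : LinearMap.ker Wᵀ.mulVecLin = ⊥ := by
      have h := LinearMap.finrank_range_add_finrank_ker Wᵀ.mulVecLin
      have hrk : Module.finrank F (LinearMap.range Wᵀ.mulVecLin) = d := by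
        have : Wᵀ.rank = d := by rw [Matrix.rank_transpose, hWrank]
        exact this
      rw [hrk, Module.finrank_pi, Fintype.card_fin] at h
      rw [← Submodule.finrank_eq_zero]
      omega
    intro x hx
    have : x ∈ LinearMap.ker Wᵀ.mulVecLin := by
      rw [LinearMap.mem_ker, Matrix.mulVecLin_apply]; exact hx
    rwa [hkerW, Submodule.mem_bot] at this
  -- W transpose image
  have hspanW : ∀ x : Fin d → F, ∃ lam : F[X], lam.degree < (d : ℕ) ∧
      Wᵀ.mulVec x = fun i => lam.eval (α i) := by
    intro x
    have hx : Wᵀ.mulVec x ∈ Submodule.span F (Set.range W) := by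
      have heq : Wᵀ.mulVec x = ∑ j, x j • W j := by
        ext i
        simp only [Matrix.mulVec, dotProduct, Matrix.transpose_apply, Finset.sum_apply,
          Pi.smul_apply, smul_eq_mul]
        exact Finset.sum_congr rfl fun j _ => by ring
      rw [heq]
      exact Submodule.sum_mem _ fun j _ =>
        Submodule.smul_mem _ _ (Submodule.subset_span ⟨j, rfl⟩)
    have : Wᵀ.mulVec x ∈ (Submodule.span F (Set.range W) : Set (Fin R → F)) := hx
    rw [hW] at this
    obtain ⟨lam, h1, h2⟩ := this
    exact ⟨lam, h1, h2⟩
  -- main rank computation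
  have hrankd : ∀ g : F[X], g ≠ 0 → g.degree < (k : ℕ) →
      (V * Matrix.diagonal (fun i => g.eval (α i)) * Wᵀ).rank = d := by
    intro g hg hgdeg
    have hgnat : g.natDegree < k := (natDegree_lt_iff_degree_lt hg).mpr hgdeg
    set M := V * Matrix.diagonal (fun i => g.eval (α i)) * Wᵀ with hM
    have hkerM : LinearMap.ker M.mulVecLin = ⊥ := by
      rw [LinearMap.ker_eq_bot']
      intro x hx
      rw [Matrix.mulVecLin_apply] at hx
      obtain ⟨lam, hlamdeg, hlam⟩ := hspanW x
      have hxv : V.mulVec (fun i => g.eval (α i) * lam.eval (α i)) = 0 := by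
        have h1 : M.mulVec x =
            V.mulVec ((Matrix.diagonal (fun i => g.eval (α i))).mulVec (Wᵀ.mulVec x)) := by
          rw [hM, ← Matrix.mulVec_mulVec, ← Matrix.mulVec_mulVec]
        rw [h1, hlam, aux_diagonal_mulVec] at hx
        exact hx
      obtain ⟨μ, hμdeg, hμ⟩ := hker _ hxv
      -- g * lam = f * μ
      have heval : ∀ i, (g * lam - f * μ).eval (α i) = 0 := by
        intro i
        have := congrFun hμ i
        simp only [eval_sub, eval_mul]
        rw [← this, sub_self]
      have hlamzero : lam = 0 := by
        by_contra hlam0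
        have hlamnat : lam.natDegree < d := (natDegree_lt_iff_degree_lt hlam0).mpr hlamdeg
        have h1 : (g * lam).degree < (R : ℕ) := by
          apply (natDegree_lt_iff_degree_lt (mul_ne_zero hg hlam0)).mp
          rw [natDegree_mul hg hlam0]
          omega
        have h2 : (f * μ).degree < (R : ℕ) := by
          by_cases hμ0 : μ = 0
          · rw [hμ0, mul_zero, degree_zero]
            exact WithBot.bot_lt_coe _
          · apply (natDegree_lt_iff_degree_lt (mul_ne_zero hfne0 hμ0)).mp
            have hμnat : μ.natDegree < d - 1 := (natDegree_lt_iff_degree_lt hμ0).mpr hμdeg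
            rw [natDegree_mul hfne0 hμ0, hfdeg]
            omega
        have hdegsub : (g * lam - f * μ).degree < (R : ℕ) :=
          lt_of_le_of_lt (degree_sub_le _ _) (max_lt h1 h2)
        have hzero : g * lam - f * μ = 0 := aux_eval_inj α hα _ hdegsub heval
        have heq2 : g * lam = f * μ := by linear_combination hzero
        have hdvd : f ∣ g * lam := Dvd.intro μ heq2.symm
        rcases (hf.prime.2.2 g lam hdvd) with h | h
        · have := natDegree_le_of_dvd h hg
          omega
        · have := natDegree_le_of_dvd h hlam0
          omega
      have hx0 : Wᵀ.mulVec x = 0 := by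
        rw [hlam, hlamzero]
        funext i; simp
      exact hWinj x hx0
    have h := LinearMap.finrank_range_add_finrank_ker M.mulVecLin
    rw [hkerM, finrank_bot, Module.finrank_pi, Fintype.card_fin] at h
    rw [Matrix.rank]
    omega
  refine ⟨fun g hg hgdeg => le_of_eq (hrankd g hg hgdeg).symm, ?_⟩
  intro C' hC'
  have hC'mem : ∀ M, M ∈ C' ↔ ∃ g : F[X], g.degree < (k : ℕ) ∧
      M = V * Matrix.diagonal (fun i => g.eval (α i)) * Wᵀ := fun M => by
    rw [← SetLike.mem_coe, hC']
    rfl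
  have hΨ0 : V * Matrix.diagonal (fun i => (0 : F[X]).eval (α i)) * Wᵀ = 0 := by
    simp
  -- every nonzero element of C' has rank d
  have hrankmem : ∀ M, M ∈ C' → M ≠ 0 → M.rank = d := by
    intro M hM hM0
    obtain ⟨g, hgdeg, rfl⟩ := (hC'mem M).mp hM
    have hg : g ≠ 0 := by rintro rfl; exact hM0 hΨ0
    exact hrankd g hg hgdeg
  have hdeg1 : (1 : F[X]).degree < (k : ℕ) :=
    (natDegree_lt_iff_degree_lt one_ne_zero).mp (by simpa using by omega : (1:F[X]).natDegree < k)
  have hΨ1mem : V * Matrix.diagonal (fun i => (1 : F[X]).eval (α i)) * Wᵀ ∈ C' :=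
    (hC'mem _).mpr ⟨1, hdeg1, rfl⟩
  have hΨ1ne : V * Matrix.diagonal (fun i => (1 : F[X]).eval (α i)) * Wᵀ ≠ 0 := by
    intro h
    have := hrankd 1 one_ne_zero hdeg1
    rw [h, Matrix.rank_zero] at this
    omega
  -- the linear parametrization of C'
  let L : degreeLT F k →ₗ[F] Matrix (Fin k) (Fin d) F :=
    { toFun := fun g => V * Matrix.diagonal (fun i => (g : F[X]).eval (α i)) * Wᵀ
      map_add' := by
        intro a b
        have : Matrix.diagonal (fun i => ((a : F[X]) + (b : F[X])).eval (α i)) =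
            Matrix.diagonal (fun i => (a : F[X]).eval (α i)) +
            Matrix.diagonal (fun i => (b : F[X]).eval (α i)) := by
          rw [Matrix.diagonal_add]
          congr 1
          funext i
          simp [eval_add]
        simp only [Submodule.coe_add, this, Matrix.mul_add, Matrix.add_mul]
      map_smul' := by
        intro c a
        have hfun : (fun i => (c • (a : F[X])).eval (α i)) =
            c • fun i => (a : F[X]).eval (α i) := by
          funext i; simp [eval_smul]
        simp only [SetLike.val_smul, RingHom.id_apply]
        rw [hfun, Matrix.diagonal_smul, Matrix.mul_smul, Matrix.smul_mul] }
  have hLapp : ∀ g : degreeLT F k,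
      L g = V * Matrix.diagonal (fun i => (g : F[X]).eval (α i)) * Wᵀ := fun _ => rfl
  have hLinj : Function.Injective L := by
    rw [← LinearMap.ker_eq_bot, LinearMap.ker_eq_bot']
    intro g hg
    by_contra hg0
    have hgne : (g : F[X]) ≠ 0 := fun h => hg0 (Subtype.ext h)
    have := hrankd (g : F[X]) hgne (mem_degreeLT.mp g.2)
    rw [← hLapp, hg, Matrix.rank_zero] at this
    omega
  have hC'range : C' = LinearMap.range L := by
    ext M
    rw [hC'mem, LinearMap.mem_range]
    constructor
    · rintro ⟨g, hgdeg, rfl⟩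
      exact ⟨⟨g, mem_degreeLT.mpr hgdeg⟩, rfl⟩
    · rintro ⟨g, rfl⟩
      exact ⟨(g : F[X]), mem_degreeLT.mp g.2, rfl⟩
  have hfinC : Module.finrank F C' = k := by
    rw [hC'range, LinearMap.finrank_range_of_inj hLinj,
      (Polynomial.degreeLTEquiv F k).finrank_eq, Module.finrank_pi, Fintype.card_fin]
  refine ⟨hfinC, ?_, ?_⟩
  -- minimum rank distance
  · have hset : {r : ℕ | ∃ M ∈ C', M ≠ 0 ∧ M.rank = r} = {d} := by
      ext r
      simp only [Set.mem_setOf_eq, Set.mem_singleton_iff]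
      constructor
      · rintro ⟨M, hM, hM0, rfl⟩
        exact hrankmem M hM hM0
      · rintro rfl
        exact ⟨_, hΨ1mem, hΨ1ne, hrankmem _ hΨ1mem hΨ1ne⟩
    rw [minRankDist, hset]
    exact csInf_singleton d
  -- tensor rank
  · -- column of V nonzero
    have hVcol : ∀ i : Fin R, (fun a => V a i) ≠ 0 := by
      intro i h
      have h0 : V.mulVec (Pi.single i 1) = 0 := by
        rw [Matrix.mulVec_single]
        funext a
        simpa using congrFun h a
      obtain ⟨μ, hμdeg, hμ⟩ := hker _ h0
      have hμz : ∀ j ∈ Finset.univ.erase i, μ.eval (α j) = 0 := by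
        intro j hj
        have := congrFun hμ j
        rw [Pi.single_eq_of_ne (Finset.ne_of_mem_erase hj)] at this
        rcases mul_eq_zero.mp this.symm with hc | hc
        · exact absurd hc (hfroot _)
        · exact hc
      have hμ0 : μ = 0 := by
        apply aux_eval_zero_on α hα (Finset.univ.erase i) μ _ hμz
        rw [Finset.card_erase_of_mem (Finset.mem_univ i), Finset.card_univ, Fintype.card_fin]
        refine lt_of_lt_of_le hμdeg ?_
        exact_mod_cast (show (d - 1 : ℕ) ≤ R - 1 by omega)
      have := congrFun hμ i
      rw [Pi.single_eq_same, hμ0] at this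
      simp at this
    -- column of W nonzero
    have hWcol : ∀ i : Fin R, (fun b => W b i) ≠ 0 := by
      intro i h
      have hone : (fun _ : Fin R => (1 : F)) ∈ Submodule.span F (Set.range W) := by
        have hmem : (fun _ : Fin R => (1 : F)) ∈
            {v : Fin R → F | ∃ lam : F[X], lam.degree < (d : ℕ) ∧
              v = fun i => lam.eval (α i)} := by
          refine ⟨1, ?_, by funext j; simp⟩
          exact (natDegree_lt_iff_degree_lt one_ne_zero).mp (by simpa using by omega :
            (1:F[X]).natDegree < d)
        rw [← hW] at hmem
        exact hmem
      have hzero : ∀ v ∈ Submodule.span F (Set.range W), v i = (0 : F) := by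
        intro v hv
        induction hv using Submodule.span_induction with
        | mem x hx =>
          obtain ⟨j, rfl⟩ := hx
          exact congrFun h j
        | zero => rfl
        | add x y _ _ hx hy => simp [hx, hy]
        | smul c x _ hx => simp [hx]
      exact one_ne_zero (hzero _ hone)
    -- the canonical rank-one decomposition
    let A : Fin R → Matrix (Fin k) (Fin d) F :=
      fun i => vecMulVec (fun a => V a i) (fun b => W b i)
    have hdecomp : ∀ c : Fin R → F, V * Matrix.diagonal c * Wᵀ = ∑ i, c i • A i := by
      intro c
      ext a b
      rw [Matrix.mul_apply]
      simp only [A, Matrix.mul_diagonal, Matrix.transpose_apply, Matrix.sum_apply,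
        Matrix.smul_apply, vecMulVec_apply, smul_eq_mul]
      apply Finset.sum_congr rfl
      intro j _
      ring
    have hmemR : R ∈ {T : ℕ | ∃ A : Fin T → Matrix (Fin k) (Fin d) F,
        (∀ r, (A r).rank = 1) ∧ C' ≤ Submodule.span F (Set.range A)} := by
      refine ⟨A, fun r => aux_rank_vecMulVec (hVcol r) (hWcol r), ?_⟩
      intro M hM
      obtain ⟨g, hgdeg, rfl⟩ := (hC'mem M).mp hM
      rw [hdecomp]
      exact Submodule.sum_mem _ fun i _ =>
        Submodule.smul_mem _ _ (Submodule.subset_span ⟨i, rfl⟩)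
    have hmem : (k + d - 1) ∈ {T : ℕ | ∃ A : Fin T → Matrix (Fin k) (Fin d) F,
        (∀ r, (A r).rank = 1) ∧ C' ≤ Submodule.span F (Set.range A)} := by
      rw [← hR]; exact hmemR
    -- lower bound
    have hlb : ∀ T : ℕ, T ∈ {T : ℕ | ∃ A : Fin T → Matrix (Fin k) (Fin d) F,
        (∀ r, (A r).rank = 1) ∧ C' ≤ Submodule.span F (Set.range A)} → k + d - 1 ≤ T := by
      rintro T ⟨B, hB1, hspan⟩
      set σ : (Fin T → F) →ₗ[F] Matrix (Fin k) (Fin d) F :=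
        Fintype.linearCombination F B with hσ
      have hσapp : ∀ c : Fin T → F, σ c = ∑ i, c i • B i := fun _ => rfl
      have hCle : C' ≤ LinearMap.range σ := by
        rw [hσ, Fintype.range_linearCombination]
        exact hspan
      have hrankσ : ∀ c : Fin T → F, ∀ s : Finset (Fin T),
          (∀ i, c i ≠ 0 → i ∈ s) → (σ c).rank ≤ s.card := by
        intro c s hs
        rw [hσapp]
        refine le_trans (aux_rank_lc_le B (fun r => le_of_eq (hB1 r)) c) ?_
        apply Finset.card_le_card
        intro i hi
        simp only [Finset.mem_filter, Finset.mem_univ, true_and] at hi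
        exact hs i hi
      -- T ≥ d
      have hTd : d ≤ T := by
        by_contra hT
        push_neg at hT
        obtain ⟨c, hc⟩ := hCle hΨ1mem
        have h1 : (σ c).rank ≤ T := by
          refine le_trans (hrankσ c Finset.univ fun i _ => Finset.mem_univ i) ?_
          simp
        rw [hc, hrankmem _ hΨ1mem hΨ1ne] at h1
        omega
      obtain ⟨s, _, hscard⟩ := Finset.exists_subset_card_eq (s := (Finset.univ : Finset (Fin T))) (n := d - 1)
        (by simpa using by omega : d - 1 ≤ (Finset.univ : Finset (Fin T)).card)
      -- split the surjection onto C'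
      set P : Submodule F (Fin T → F) := Submodule.comap σ C' with hP
      have hrestr : ∀ x ∈ P, σ x ∈ C' := fun x hx => hx
      set ρ : P →ₗ[F] C' := σ.restrict hrestr with hρ
      have hρsurj : LinearMap.range ρ = ⊤ := by
        rw [LinearMap.range_eq_top]
        rintro ⟨M, hM⟩
        obtain ⟨c, hc⟩ := hCle hM
        have hcP : c ∈ P := by
          rw [hP, Submodule.mem_comap, hc]
          exact hM
        exact ⟨⟨c, hcP⟩, Subtype.ext hc⟩
      obtain ⟨ι, hι⟩ := ρ.exists_rightInverse_of_surjective hρsurj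
      set j : C' →ₗ[F] (Fin T → F) := P.subtype.comp ι with hj
      have hσj : ∀ N : C', σ (j N) = (N : Matrix (Fin k) (Fin d) F) := by
        intro N
        have h1 : ρ (ι N) = N := by
          have := LinearMap.ext_iff.mp hι N
          simpa using this
        have h2 : ((ρ (ι N)) : Matrix (Fin k) (Fin d) F) = σ ((ι N : Fin T → F)) := rfl
        rw [h1] at h2
        exact h2.symm
      -- projection away from s is injective on C'
      set π : (Fin T → F) →ₗ[F] ((sᶜ : Finset (Fin T)) → F) :=
        LinearMap.funLeft F F (fun i : (sᶜ : Finset (Fin T)) => (i : Fin T)) with hπ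
      have hinj : Function.Injective (π.comp j) := by
        rw [← LinearMap.ker_eq_bot, LinearMap.ker_eq_bot']
        intro N hN
        have hsupp : ∀ i : Fin T, (j N) i ≠ 0 → i ∈ s := by
          intro i hi
          by_contra hins
          have : (j N) i = 0 := by
            have := congrFun hN (⟨i, Finset.mem_compl.mpr hins⟩ : (sᶜ : Finset (Fin T)))
            exact this
          exact hi this
        have hrk : (σ (j N)).rank ≤ d - 1 := by
          rw [← hscard]
          exact hrankσ _ s hsupp
        rw [hσj] at hrk
        by_contra hN0
        have hNne : (N : Matrix (Fin k) (Fin d) F) ≠ 0 := by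
          intro h
          exact hN0 (Subtype.ext h)
        rw [hrankmem _ N.2 hNne] at hrk
        omega
      have hcard : Module.finrank F ((sᶜ : Finset (Fin T)) → F) = T - (d - 1) := by
        rw [Module.finrank_pi, Fintype.card_coe, Finset.card_compl, hscard, Fintype.card_fin]
      have hkle : k ≤ T - (d - 1) := by
        have := LinearMap.finrank_le_finrank_of_injective hinj
        rwa [hfinC, hcard] at this
      omega
    rw [trkCode]
    exact le_antisymm (Nat.sInf_le hmem) (le_csInf ⟨_, hmem⟩ hlb)
end

section
/- Let q be a prime power and let C ⊆ 𝔽_q^{n×m} be a rank-metric code of dimension k ≥ 2, minimum distance at least d, and tensor rank R. Then there exists a subcode D ⊂ C with dim(D) = k − 1, minimum distance of D at least d, and trk(D) ≤ R − 1. -/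
open Matrix

lemma rank_stdBasisMatrix_one {F : Type*} [Field F] {n m : ℕ} (i : Fin n) (j : Fin m) :
    (Matrix.single i j (1 : F)).rank = 1 := by
  refine le_antisymm ?_ ?_
  · rw [single_eq_single_vecMulVec_single, vecMulVec_eq (Fin 1)]
    calc (replicateCol (Fin 1) (Pi.single i (1:F)) * replicateRow (Fin 1) (Pi.single j (1:F))).rank
        ≤ (replicateCol (Fin 1) (Pi.single i (1:F))).rank := rank_mul_le_left _ _
      _ ≤ Fintype.card (Fin 1) := rank_le_card_width _
      _ = 1 := by simp
  · rw [Nat.one_le_iff_ne_zero]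
    intro h0
    have hbot : LinearMap.range (Matrix.single i j (1 : F)).mulVecLin = ⊥ :=
      Submodule.finrank_eq_zero.mp h0
    have h1 : (Matrix.single i j (1 : F)).mulVecLin (Pi.single j 1) = 0 := by
      have := hbot ▸ LinearMap.mem_range_self (Matrix.single i j (1 : F)).mulVecLin
        (Pi.single j 1)
      simpa using this
    have := congrFun h1 i
    simp [mulVecLin_apply, mulVec_single] at this

lemma finrank_span_singleton_le' {F V : Type*} [Field F] [AddCommGroup V] [Module F V]
    (x : V) : Module.finrank F ↥(Submodule.span F {x}) ≤ 1 := by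
  rcases eq_or_ne x 0 with rfl | hx
  · rw [Submodule.span_zero_singleton, finrank_bot]; omega
  · rw [finrank_span_singleton hx]

/-- The defining set for `trkCode` is nonempty. -/
lemma trk_set_nonempty {F : Type*} [Field F] {n m : ℕ}
    (C : Submodule F (Matrix (Fin n) (Fin m) F)) :
    {R : ℕ | ∃ A : Fin R → Matrix (Fin n) (Fin m) F,
      (∀ r, (A r).rank = 1) ∧ C ≤ Submodule.span F (Set.range A)}.Nonempty := by
  classical
  refine ⟨n * m, (fun p : Fin n × Fin m => Matrix.single p.1 p.2 (1 : F)) ∘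
    finProdFinEquiv.symm, fun r => rank_stdBasisMatrix_one _ _, ?_⟩
  have hfun : ⇑(Matrix.stdBasis F (Fin n) (Fin m)) =
      fun p : Fin n × Fin m => Matrix.single p.1 p.2 (1 : F) := by
    funext p
    cases p
    exact Matrix.stdBasis_eq_single (R := F) _ _
  rw [finProdFinEquiv.symm.surjective.range_comp, ← hfun,
    (Matrix.stdBasis F (Fin n) (Fin m)).span_eq]
  exact le_top

/-- A rank-metric code of dimension `k ≥ 2`, minimum distance at least `d` and tensor
rank `R` has a subcode of dimension `k - 1`, minimum distance at least `d` and tensor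
rank at most `R - 1`. -/
theorem exists_subcode_smaller_trk {F : Type*} [Field F] [Fintype F] {n m d R : ℕ}
    (C : Submodule F (Matrix (Fin n) (Fin m) F))
    (hk : 2 ≤ Module.finrank F C)
    (hd : ∀ M ∈ C, M ≠ 0 → d ≤ M.rank)
    (hR : trkCode C = R) :
    ∃ D : Submodule F (Matrix (Fin n) (Fin m) F), D < C ∧
      Module.finrank F D = Module.finrank F C - 1 ∧
      (∀ M ∈ D, M ≠ 0 → d ≤ M.rank) ∧
      trkCode D ≤ R - 1 := by
  classical
  set S := {R : ℕ | ∃ A : Fin R → Matrix (Fin n) (Fin m) F,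
    (∀ r, (A r).rank = 1) ∧ C ≤ Submodule.span F (Set.range A)} with hS
  have hsInf : sInf S = R := hR
  have hmem : R ∈ S := hsInf ▸ Nat.sInf_mem (trk_set_nonempty C)
  have hCne : C ≠ ⊥ := by
    intro h
    rw [h] at hk
    simp at hk
  have hRpos : R ≠ 0 := by
    rintro rfl
    obtain ⟨A, -, hle⟩ := hmem
    have : Set.range A = ∅ := by
      rw [Set.range_eq_empty_iff]; exact ⟨fun i => absurd i.2 (by omega)⟩
    rw [this, Submodule.span_empty, le_bot_iff] at hle
    exact hCne hle
  obtain ⟨r, rfl⟩ := Nat.exists_eq_succ_of_ne_zero hRpos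
  obtain ⟨A, hA1, hle⟩ := hmem
  set W := Submodule.span F (Set.range (A ∘ Fin.succ)) with hW
  -- C is not contained in W, by minimality
  have hnotle : ¬ C ≤ W := by
    intro h
    have : r ∈ S := ⟨A ∘ Fin.succ, fun i => hA1 _, h⟩
    have := Nat.sInf_le this
    omega
  have hltCW : C ⊓ W < C :=
    lt_of_le_of_ne inf_le_left (fun h => hnotle (h ▸ inf_le_right))
  refine ⟨C ⊓ W, hltCW, ?_, ?_, ?_⟩
  · -- dimension count
    have hrange : Set.range A = insert (A 0) (Set.range (A ∘ Fin.succ)) := by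
      conv_lhs => rw [← Fin.cons_self_tail A]
      exact Fin.range_cons _ _
    have hspan : Submodule.span F (Set.range A) = (F ∙ A 0) ⊔ W := by
      rw [hrange, Submodule.span_insert]
    have hsup : C ⊔ W ≤ (F ∙ A 0) ⊔ W :=
      sup_le (le_trans hle (le_of_eq hspan)) le_sup_right
    have h1 : Module.finrank F ↥(C ⊔ W) ≤ Module.finrank F W + 1 := by
      calc Module.finrank F ↥(C ⊔ W) ≤ Module.finrank F ↥((F ∙ A 0) ⊔ W) :=
            Submodule.finrank_mono hsup
        _ ≤ Module.finrank F ↥(F ∙ A 0) + Module.finrank F W :=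
            Submodule.finrank_add_le_finrank_add_finrank _ _
        _ ≤ 1 + Module.finrank F W := by
            gcongr; exact finrank_span_singleton_le' _
        _ = Module.finrank F W + 1 := by omega
    have heq := Submodule.finrank_sup_add_finrank_inf_eq C W
    have hlt : Module.finrank F ↥(C ⊓ W) < Module.finrank F C :=
      Submodule.finrank_lt_finrank_of_lt hltCW
    omega
  · exact fun M hM => hd M hM.1
  · have hmem' : r ∈ {R : ℕ | ∃ A : Fin R → Matrix (Fin n) (Fin m) F,
        (∀ i, (A i).rank = 1) ∧ C ⊓ W ≤ Submodule.span F (Set.range A)} :=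
      ⟨A ∘ Fin.succ, fun i => hA1 _, inf_le_right⟩
    have := Nat.sInf_le hmem'
    simpa [trkCode] using this
end

section
/- Let q be a prime power, let C ⊆ 𝔽_q^{n×m} be a rank-metric code of dimension k, and let d be an integer with 2 ≤ d ≤ min{n, m}. The following are equivalent: (1) every non-zero M ∈ C has rank(M) ≥ d; (2) for every invertible A ∈ GL(n, 𝔽_q) and every subset I ⊆ {1, …, n} with |I| ≤ d − 1, the row-punctured code Π^r(C, A, I) := {(AM)_{Ī} : M ∈ C} ⊆ 𝔽_q^{(n−|I|)×m} has dimension k; (3) for every invertible B ∈ GL(m, 𝔽_q) and every subset J ⊆ {1, …, m} with |J| ≤ d − 1, the column-punctured code Π^c(C, B, J) := {(MB)^{J̄} : M ∈ C} ⊆ 𝔽_q^{n×(m−|J|)} has dimension k. -/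
open Matrix

/-- Row puncturing: `M ↦ (A M)_{Ī}`, keeping only the rows of `A M` outside `I`,
as a linear map. -/
def rowPunct {F : Type*} [Field F] {n m : ℕ} (A : Matrix (Fin n) (Fin n) F)
    (I : Finset (Fin n)) :
    Matrix (Fin n) (Fin m) F →ₗ[F] Matrix {j : Fin n // j ∉ I} (Fin m) F where
  toFun M := Matrix.of fun j l => (A * M) j.1 l
  map_add' M N := by
    ext j l
    simp [Matrix.mul_add]
  map_smul' c M := by
    ext j l
    simp [Matrix.mul_smul]

/-- Column puncturing: `M ↦ (M B)^{J̄}`, keeping only the columns of `M B` outside `J`,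
as a linear map. -/
def colPunct {F : Type*} [Field F] {n m : ℕ} (B : Matrix (Fin m) (Fin m) F)
    (J : Finset (Fin m)) :
    Matrix (Fin n) (Fin m) F →ₗ[F] Matrix (Fin n) {l : Fin m // l ∉ J} F where
  toFun M := Matrix.of fun i l => (M * B) i l.1
  map_add' M N := by
    ext i l
    simp [Matrix.add_mul]
  map_smul' c M := by
    ext i l
    simp [Matrix.smul_mul]

open Module Submodule

lemma finrank_map_eq_iff' {F V W : Type*} [Field F] [AddCommGroup V] [Module F V]
    [AddCommGroup W] [Module F W] [FiniteDimensional F V]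
    (f : V →ₗ[F] W) (C : Submodule F V) :
    Module.finrank F (C.map f) = Module.finrank F C ↔ ∀ x ∈ C, f x = 0 → x = 0 := by
  have hmap : C.map f = LinearMap.range (f ∘ₗ C.subtype) := by
    rw [LinearMap.range_comp, Submodule.range_subtype]
  have hrn := LinearMap.finrank_range_add_finrank_ker (f ∘ₗ C.subtype)
  rw [hmap]
  constructor
  · intro h x hx hfx
    have h0 : Module.finrank F (LinearMap.ker (f ∘ₗ C.subtype)) = 0 := by omega
    have hker : LinearMap.ker (f ∘ₗ C.subtype) = ⊥ :=
      Submodule.finrank_eq_zero.mp h0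
    have hm : (⟨x, hx⟩ : C) ∈ LinearMap.ker (f ∘ₗ C.subtype) := by
      simp [LinearMap.mem_ker, hfx]
    rw [hker, Submodule.mem_bot] at hm
    simpa using congrArg Subtype.val hm
  · intro h
    have hker : LinearMap.ker (f ∘ₗ C.subtype) = ⊥ := by
      ext x
      simp only [LinearMap.mem_ker, LinearMap.comp_apply, Submodule.subtype_apply,
        Submodule.mem_bot]
      constructor
      · intro hx
        exact Subtype.ext (h x.1 x.2 hx)
      · rintro rfl; simp
    rw [hker, finrank_bot] at hrn
    omega

lemma rank_le_of_rows_zero {F : Type*} [Field F] {n m : ℕ}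
    (M : Matrix (Fin n) (Fin m) F) (I : Finset (Fin n))
    (h : ∀ j ∉ I, M j = 0) : M.rank ≤ I.card := by
  classical
  rw [Matrix.rank_eq_finrank_span_row]
  have hsub : Submodule.span F (Set.range M) ≤
      Submodule.span F ((I.image M : Finset (Fin m → F)) : Set (Fin m → F)) := by
    rw [Submodule.span_le]
    rintro _ ⟨j, rfl⟩
    by_cases hj : j ∈ I
    · exact Submodule.subset_span (Finset.mem_coe.mpr (Finset.mem_image_of_mem M hj))
    · rw [h j hj]; exact Submodule.zero_mem _
  calc finrank F (Submodule.span F (Set.range M))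
      ≤ finrank F (Submodule.span F ((I.image M : Finset (Fin m → F)) : Set (Fin m → F))) :=
        Submodule.finrank_mono hsub
    _ ≤ (I.image M).card := finrank_span_finset_le_card _
    _ ≤ I.card := Finset.card_image_le

lemma exists_unit_rows_zero {F : Type*} [Field F] {n m : ℕ}
    (M : Matrix (Fin n) (Fin m) F) {r : ℕ} (hr : M.rank ≤ r) (hrn : r ≤ n) :
    ∃ (A : Matrix (Fin n) (Fin n) F) (I : Finset (Fin n)), IsUnit A ∧ I.card ≤ r ∧
      ∀ j ∉ I, (A * M) j = 0 := by
  classical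
  set K := LinearMap.ker (M.vecMulLinear) with hK
  have hrk : finrank F (LinearMap.range M.vecMulLinear) = M.rank := by
    rw [range_vecMulLinear, Matrix.rank_eq_finrank_span_row]
  have hrn2 := LinearMap.finrank_range_add_finrank_ker M.vecMulLinear
  rw [hrk, Module.finrank_pi, Fintype.card_fin] at hrn2
  set a := finrank F K with ha
  obtain ⟨K', hcompl⟩ := Submodule.exists_isCompl K
  have hab : a + finrank F K' = n := by
    have := Submodule.finrank_add_eq_of_isCompl hcompl
    rwa [Module.finrank_pi, Fintype.card_fin] at this
  set b := finrank F K' with hb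
  let bK := Module.finBasis F K
  let bK' := Module.finBasis F K'
  let e := Submodule.prodEquivOfIsCompl K K' hcompl
  let bb : Basis (Fin n) F (Fin n → F) :=
    ((bK.prod bK').map e).reindex (finSumFinEquiv.trans (finCongr hab))
  have hbbK : ∀ i : Fin n, (i : ℕ) < a → bb i ∈ K := by
    intro i hi
    have h1 : bb i = e (bK.prod bK' (finSumFinEquiv.symm ((finCongr hab).symm i))) := by
      simp [bb, Basis.reindex_apply, Basis.map_apply]
    have h2 : (finCongr hab).symm i = Fin.castAdd b ⟨(i : ℕ), hi⟩ := by
      ext; simp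
    rw [h2, finSumFinEquiv_symm_apply_castAdd] at h1
    have h3 : bK.prod bK' (Sum.inl ⟨(i : ℕ), hi⟩) = (bK ⟨(i : ℕ), hi⟩, 0) := by
      ext : 1
      · exact Basis.prod_apply_inl_fst _ _ _
      · exact Basis.prod_apply_inl_snd _ _ _
    rw [h3] at h1
    rw [h1, Submodule.coe_prodEquivOfIsCompl']
    simp
  let A : Matrix (Fin n) (Fin n) F := Matrix.of fun i j => bb i j
  have hA : IsUnit A := by
    have hAe : A = ((Pi.basisFun F (Fin n)).toMatrix bb)ᵀ := by
      ext i j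
      simp [A, Basis.toMatrix_apply, Pi.basisFun_repr]
    rw [hAe, Matrix.isUnit_transpose]
    have := (Pi.basisFun F (Fin n)).invertibleToMatrix bb
    exact isUnit_of_invertible _
  refine ⟨A, Finset.univ.filter (fun i : Fin n => a ≤ (i : ℕ)), hA, ?_, ?_⟩
  · have hcard : (Finset.univ.filter (fun i : Fin n => a ≤ (i : ℕ))).card = n - a := by
      have : (Finset.univ.filter (fun i : Fin n => a ≤ (i : ℕ)))
          = Finset.map ⟨fun j : Fin (n - a) => (⟨a + (j : ℕ), by omega⟩ : Fin n),
              fun x y hxy => by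
                have := congrArg Fin.val hxy
                simp at this
                exact Fin.ext this⟩ Finset.univ := by
        ext i
        simp only [Finset.mem_filter, Finset.mem_univ, true_and, Finset.mem_map,
          Function.Embedding.coeFn_mk]
        constructor
        · intro hi
          have hilt : (i : ℕ) < n := i.isLt
          exact ⟨⟨(i : ℕ) - a, by omega⟩, Fin.ext (by show a + ((i : ℕ) - a) = (i : ℕ); omega)⟩
        · rintro ⟨j, -, rfl⟩
          show a ≤ a + (j : ℕ); omega
      rw [this, Finset.card_map, Finset.card_univ, Fintype.card_fin]
    rw [hcard]
    omega
  · intro j hj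
    have hj' : (j : ℕ) < a := by
      simp only [Finset.mem_filter, Finset.mem_univ, true_and, not_le] at hj
      exact hj
    have hKj : bb j ∈ K := hbbK j hj'
    rw [hK, LinearMap.mem_ker] at hKj
    funext l
    have : (A * M) j l = M.vecMulLinear (bb j) l := by
      simp [Matrix.mul_apply, Matrix.vecMulLinear_apply, Matrix.vecMul, dotProduct, A]
    rw [this, hKj]

lemma row_aux {F : Type*} [Field F] {n m k d : ℕ}
    (C : Submodule F (Matrix (Fin n) (Fin m) F)) (hk : Module.finrank F C = k)
    (hd1 : 1 ≤ d) (hdn : d ≤ n) :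
    (∀ M ∈ C, M ≠ 0 → d ≤ M.rank) ↔
    (∀ (A : Matrix (Fin n) (Fin n) F), IsUnit A → ∀ I : Finset (Fin n),
      I.card ≤ d - 1 → Module.finrank F (C.map (rowPunct A I)) = k) := by
  classical
  constructor
  · intro h A hA I hI
    rw [← hk, finrank_map_eq_iff']
    intro M hM h0
    by_contra hne
    have hrows : ∀ j ∉ I, (A * M) j = 0 := by
      intro j hj
      funext l
      exact congrFun (congrFun h0 ⟨j, hj⟩) l
    have h1 : (A * M).rank ≤ I.card := rank_le_of_rows_zero _ _ hrows
    have h2 : (A * M).rank = M.rank :=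
      Matrix.rank_mul_eq_right_of_isUnit_det A M ((Matrix.isUnit_iff_isUnit_det A).mp hA)
    have h3 := h M hM hne
    omega
  · intro h M hM hne
    by_contra hlt
    push_neg at hlt
    have hr : M.rank ≤ d - 1 := by omega
    obtain ⟨A, I, hA, hI, hrows⟩ := exists_unit_rows_zero M hr (by omega)
    have hfin := h A hA I hI
    rw [← hk, finrank_map_eq_iff'] at hfin
    apply hne
    apply hfin M hM
    ext ⟨j, hj⟩ l
    simpa [rowPunct] using congrFun (hrows j hj) l

/-- A rank-metric code `C ⊆ 𝔽_q^{n×m}` of dimension `k` has minimum distance `≥ d` iff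
every row-punctured code `Π^r(C, A, I)` with `A` invertible and `|I| ≤ d - 1` has
dimension `k`, iff every column-punctured code `Π^c(C, B, J)` with `B` invertible and
`|J| ≤ d - 1` has dimension `k`. -/
theorem minDist_iff_punctured_dims {F : Type*} [Field F] [Fintype F] {n m k d : ℕ}
    (C : Submodule F (Matrix (Fin n) (Fin m) F)) (hk : Module.finrank F C = k)
    (hd2 : 2 ≤ d) (hdn : d ≤ n) (hdm : d ≤ m) :
    List.TFAE [
      ∀ M ∈ C, M ≠ 0 → d ≤ M.rank,
      ∀ (A : Matrix (Fin n) (Fin n) F), IsUnit A → ∀ I : Finset (Fin n),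
        I.card ≤ d - 1 → Module.finrank F (C.map (rowPunct A I)) = k,
      ∀ (B : Matrix (Fin m) (Fin m) F), IsUnit B → ∀ J : Finset (Fin m),
        J.card ≤ d - 1 → Module.finrank F (C.map (colPunct B J)) = k] := by
  classical
  have hrow := row_aux C hk (by omega) hdn
  set T : Matrix (Fin n) (Fin m) F ≃ₗ[F] Matrix (Fin m) (Fin n) F :=
    Matrix.transposeLinearEquiv (Fin n) (Fin m) F F with hT
  set Ct : Submodule F (Matrix (Fin m) (Fin n) F) := C.map (T : _ →ₗ[F] _) with hCt
  have hkt : Module.finrank F Ct = k := by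
    rw [hCt, LinearEquiv.finrank_map_eq T C, hk]
  have h1t : (∀ M ∈ C, M ≠ 0 → d ≤ M.rank) ↔ (∀ M ∈ Ct, M ≠ 0 → d ≤ M.rank) := by
    constructor
    · intro h M hM hne
      rw [hCt, Submodule.mem_map] at hM
      obtain ⟨N, hN, rfl⟩ := hM
      have hTN : (T : _ →ₗ[F] _) N = Nᵀ := rfl
      rw [hTN] at hne ⊢
      rw [Matrix.rank_transpose]
      refine h N hN (fun h0 => hne ?_)
      rw [h0]; simp
    · intro h M hM hne
      have hmem : Mᵀ ∈ Ct := by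
        rw [hCt, Submodule.mem_map]
        exact ⟨M, hM, rfl⟩
      have hTne : Mᵀ ≠ 0 := fun h0 => hne (by simpa using congrArg Matrix.transpose h0)
      have := h Mᵀ hmem hTne
      rwa [Matrix.rank_transpose] at this
  have hrowt := row_aux Ct hkt (by omega) hdm
  have hrel : ∀ (B : Matrix (Fin m) (Fin m) F) (J : Finset (Fin m)),
      Module.finrank F (Ct.map (rowPunct Bᵀ J)) = Module.finrank F (C.map (colPunct B J)) := by
    intro B J
    let T' : Matrix (Fin n) {l : Fin m // l ∉ J} F ≃ₗ[F] Matrix {l : Fin m // l ∉ J} (Fin n) F :=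
      Matrix.transposeLinearEquiv _ _ F F
    have hcomp : (rowPunct Bᵀ J) ∘ₗ (T : _ →ₗ[F] _) = T'.toLinearMap ∘ₗ colPunct B J := by
      apply LinearMap.ext
      intro M
      ext j l
      simp only [rowPunct, colPunct, LinearMap.comp_apply, LinearMap.coe_mk, AddHom.coe_mk,
        LinearEquiv.coe_coe, LinearEquiv.coe_toLinearMap, Matrix.transposeLinearEquiv_apply,
        Matrix.of_apply, Matrix.transpose_apply, T, T']
      have hgoal : (Bᵀ * Mᵀ) j.1 l = (M * B) l j.1 := by
        rw [← Matrix.transpose_mul]; rfl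
      exact hgoal
    rw [hCt, ← Submodule.map_comp, hcomp, Submodule.map_comp]
    exact LinearEquiv.finrank_map_eq _ _
  have h23 : (∀ (A : Matrix (Fin m) (Fin m) F), IsUnit A → ∀ I : Finset (Fin m),
        I.card ≤ d - 1 → Module.finrank F (Ct.map (rowPunct A I)) = k) ↔
      (∀ (B : Matrix (Fin m) (Fin m) F), IsUnit B → ∀ J : Finset (Fin m),
        J.card ≤ d - 1 → Module.finrank F (C.map (colPunct B J)) = k) := by
    constructor
    · intro h B hB J hJ
      rw [← hrel B J]
      exact h Bᵀ ((Matrix.isUnit_transpose _).mpr hB) J hJ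
    · intro h A hA I hI
      have := h Aᵀ ((Matrix.isUnit_transpose _).mpr hA) I hI
      rw [← hrel Aᵀ I, Matrix.transpose_transpose] at this
      exact this
  tfae_have 1 ↔ 2 := hrow
  tfae_have 1 ↔ 3 := h1t.trans (hrowt.trans h23)
  tfae_finish
end
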